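/- arXiv:1212.3902 — 3 statements merged into one kernel-verified Lean document; each statement's English description precedes it below -/
import Mathlib

section
/- Let s > 0, t > 0, α > 0, τ₁ ≥ 0, τ₂ > 0, 1 ≤ q < 4, 1 ≤ p < 4 (p rational with odd denominator). Define I(s,t) = inf { E(f,g) : (f,g) ∈ H¹_ℂ × H¹, ‖f‖²_{L²} = s, ‖g‖²_{L²} = t }, where E(f,g) = ∫ (|f'|² + (g')² − β₁|f|^{q+2} − β₂g^{p+2} − α|f|²g) dx with β₁ = 2τ₁/(q+2), β₂ = 2τ₂/((p+1)(p+2)). Then I(s,t) < 0. -/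
open MeasureTheory Real

noncomputable section

def H1C (f : ℝ → ℂ) : Prop :=
  Differentiable ℝ f ∧ MemLp f 2 ∧ MemLp (deriv f) 2

def H1R (g : ℝ → ℝ) : Prop :=
  Differentiable ℝ g ∧ MemLp g 2 ∧ MemLp (deriv g) 2

/-- Energy density: `P y` plays the role of `y^(p+2)` for `p` rational with odd
denominator, so that `P y ≤ |y|^(p+2)` and `P y = y^(p+2)` for `y ≥ 0`. -/
def Edens (β₁ β₂ α q : ℝ) (P : ℝ → ℝ) (f : ℝ → ℂ) (g : ℝ → ℝ) (x : ℝ) : ℝ :=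
  ‖deriv f x‖ ^ 2 + (deriv g x) ^ 2 - β₁ * ‖f x‖ ^ (q + 2) - β₂ * P (g x)
    - α * ‖f x‖ ^ 2 * g x

/-- The set of energies of admissible pairs with `‖f‖² = s`, `‖g‖² = t`. -/
def IVals (β₁ β₂ α q : ℝ) (P : ℝ → ℝ) (s t : ℝ) : Set ℝ :=
  { e | ∃ f : ℝ → ℂ, ∃ g : ℝ → ℝ, H1C f ∧ H1R g ∧
      Integrable (Edens β₁ β₂ α q P f g) ∧
      (∫ x : ℝ, ‖f x‖ ^ 2) = s ∧ (∫ x : ℝ, (g x) ^ 2) = t ∧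
      e = ∫ x : ℝ, Edens β₁ β₂ α q P f g x }

/-- The constrained infimum `I(s,t)`. -/
def Ifun (β₁ β₂ α q : ℝ) (P : ℝ → ℝ) (s t : ℝ) : ℝ :=
  sInf (IVals β₁ β₂ α q P s t)

lemma absorb {c θ : ℝ} (hc : 0 ≤ c) (hθ0 : 0 ≤ θ) (hθ1 : θ < 1) :
    ∃ C : ℝ, 0 ≤ C ∧ ∀ Z : ℝ, 0 ≤ Z → c * Z ^ θ ≤ Z / 3 + C := by
  rcases hc.eq_or_lt with h | hcpos
  · refine ⟨0, le_rfl, fun Z hZ => ?_⟩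
    rw [← h, zero_mul, add_zero]
    positivity
  refine ⟨c * ((3 * c) ^ (1 / (1 - θ))) ^ θ, by positivity, fun Z hZ => ?_⟩
  by_cases h3 : 3 * c ≤ Z ^ (1 - θ)
  · have hZpos : 0 < Z := by
      rcases hZ.eq_or_lt with rfl | h
      · simp [Real.zero_rpow (by linarith : (1:ℝ) - θ ≠ 0)] at h3; linarith
      · exact h
    have : c * Z ^ θ ≤ (Z ^ (1 - θ) / 3) * Z ^ θ := by
      apply mul_le_mul_of_nonneg_right (by linarith) (Real.rpow_nonneg hZ θ)
    calc c * Z ^ θ ≤ (Z ^ (1 - θ) / 3) * Z ^ θ := this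
      _ = Z / 3 := by rw [div_mul_eq_mul_div, ← Real.rpow_add hZpos]; norm_num
      _ ≤ Z / 3 + c * ((3 * c) ^ (1 / (1 - θ))) ^ θ := le_add_of_nonneg_right (by positivity)
  · push_neg at h3
    have h1θ : 0 < 1 - θ := by linarith
    have hZle : Z ≤ (3 * c) ^ (1 / (1 - θ)) := by
      have := Real.rpow_le_rpow (Real.rpow_nonneg hZ _) h3.le (by positivity : (0:ℝ) ≤ 1 / (1 - θ))
      rwa [← Real.rpow_mul hZ, mul_one_div, div_self h1θ.ne', Real.rpow_one] at this
    have : Z ^ θ ≤ ((3 * c) ^ (1 / (1 - θ))) ^ θ := Real.rpow_le_rpow hZ hZle hθ0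
    have h2 : c * Z ^ θ ≤ c * ((3 * c) ^ (1 / (1 - θ))) ^ θ :=
      mul_le_mul_of_nonneg_left this hcpos.le
    linarith [div_nonneg hZ (by norm_num : (0:ℝ) ≤ 3)]

noncomputable section

lemma abs_le_integral_abs_deriv (u : ℝ → ℝ) (hd : Differentiable ℝ u)
    (hi : Integrable u) (hi' : Integrable (deriv u)) (x : ℝ) :
    |u x| ≤ ∫ y, |deriv u y| := by
  have habs : Integrable (fun y => |deriv u y|) := hi'.abs
  have hsmall : ∀ ε : ℝ, 0 < ε → ∃ y : ℝ, |u y| ≤ ε := by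
    intro ε hε
    by_contra hcon
    push_neg at hcon
    have : Integrable (fun _ : ℝ => ε) := by
      refine hi.abs.mono' aestronglyMeasurable_const (ae_of_all _ fun y => ?_)
      simp only [Real.norm_eq_abs]
      exact (abs_of_nonneg hε.le).trans_le (hcon y).le
    rw [integrable_const_iff] at this
    rcases this with h | h
    · exact hε.ne' h
    · have := h.measure_univ_lt_top; simp [Real.volume_univ] at this
  refine le_of_forall_pos_le_add fun ε hε => ?_
  obtain ⟨y, hy⟩ := hsmall ε hε
  have hftc : ∫ t in y..x, deriv u t = u x - u y :=
    intervalIntegral.integral_deriv_eq_sub (fun t _ => hd t) hi'.intervalIntegrable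
  have hIoc : ∫ t in Set.uIoc y x, |deriv u t| ≤ ∫ t, |deriv u t| :=
    setIntegral_le_integral habs (ae_of_all _ fun t => abs_nonneg _)
  have h1 : |u x - u y| ≤ ∫ t, |deriv u t| := by
    rw [← hftc]
    refine le_trans ?_ hIoc
    simpa only [Real.norm_eq_abs] using
      (intervalIntegral.norm_integral_le_integral_norm_uIoc (f := deriv u) (a := y) (b := x)
        (μ := volume))
  calc |u x| ≤ |u y| + |u x - u y| := by
        have := abs_add_le (u y) (u x - u y); simpa using this
    _ ≤ (∫ t, |deriv u t|) + ε := by linarith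

lemma sq_norm_le_of_H1C (f : ℝ → ℂ) (hf : H1C f) (x : ℝ) :
    ‖f x‖ ^ 2 ≤ 2 * Real.sqrt (∫ y, ‖f y‖ ^ 2) * Real.sqrt (∫ y, ‖deriv f y‖ ^ 2) := by
  obtain ⟨hdiff, hf2, hf'2⟩ := hf
  set F : ℝ → ℝ := fun y => (f y).re ^ 2 + (f y).im ^ 2 with hFdef
  have hFeq : ∀ y, ‖f y‖ ^ 2 = F y := fun y => by
    rw [hFdef, Complex.sq_norm, Complex.normSq_apply]
    ring
  have hre : ∀ y, HasDerivAt (fun z => (f z).re) ((deriv f y).re) y := fun y => by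
    simpa [Function.comp_def] using
      Complex.reCLM.hasFDerivAt.comp_hasDerivAt y (hdiff y).hasDerivAt
  have him : ∀ y, HasDerivAt (fun z => (f z).im) ((deriv f y).im) y := fun y => by
    simpa [Function.comp_def] using
      Complex.imCLM.hasFDerivAt.comp_hasDerivAt y (hdiff y).hasDerivAt
  have hF' : ∀ y, HasDerivAt F
      (2 * (f y).re * (deriv f y).re + 2 * (f y).im * (deriv f y).im) y := fun y => by
    have h1 : HasDerivAt F _ y := ((hre y).pow 2).add ((him y).pow 2)
    convert h1 using 1
    push_cast
    ring
  have hderivF : deriv F = fun y =>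
      2 * (f y).re * (deriv f y).re + 2 * (f y).im * (deriv f y).im :=
    funext fun y => (hF' y).deriv
  have hIntf2 : Integrable (fun y => ‖f y‖ ^ 2) :=
    (memLp_two_iff_integrable_sq_norm hf2.aestronglyMeasurable).mp hf2
  have hIntf'2 : Integrable (fun y => ‖deriv f y‖ ^ 2) :=
    (memLp_two_iff_integrable_sq_norm hf'2.aestronglyMeasurable).mp hf'2
  have hIntF : Integrable F :=
    (integrable_congr (ae_of_all _ hFeq)).mp hIntf2
  have hIntN : Integrable (fun y => ‖f y‖ ^ 2 + ‖deriv f y‖ ^ 2) := hIntf2.add hIntf'2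
  have hmeasD : AEStronglyMeasurable
      (fun y => 2 * (f y).re * (deriv f y).re + 2 * (f y).im * (deriv f y).im) volume := by
    have h1 : AEStronglyMeasurable f volume := hdiff.continuous.aestronglyMeasurable
    have h2 : AEStronglyMeasurable (deriv f) volume := hf'2.aestronglyMeasurable
    exact (((Complex.continuous_re.comp_aestronglyMeasurable h1).const_mul 2).mul
        (Complex.continuous_re.comp_aestronglyMeasurable h2)).add
      (((Complex.continuous_im.comp_aestronglyMeasurable h1).const_mul 2).mul
        (Complex.continuous_im.comp_aestronglyMeasurable h2))
  have hnormsq : ∀ z : ℂ, ‖z‖ ^ 2 = z.re ^ 2 + z.im ^ 2 := fun z => by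
    rw [Complex.sq_norm, Complex.normSq_apply]
    ring
  have hIntF' : Integrable (deriv F) := by
    rw [hderivF]
    refine hIntN.mono' hmeasD (ae_of_all _ fun y => ?_)
    rw [Real.norm_eq_abs, abs_le]
    rw [hnormsq (f y), hnormsq (deriv f y)]
    constructor <;>
      nlinarith [sq_nonneg ((f y).re - (deriv f y).re), sq_nonneg ((f y).im - (deriv f y).im),
        sq_nonneg ((f y).re + (deriv f y).re), sq_nonneg ((f y).im + (deriv f y).im)]
  have hdiffF : Differentiable ℝ F := fun y => (hF' y).differentiableAt
  have key : |F x| ≤ ∫ y, |deriv F y| :=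
    abs_le_integral_abs_deriv F hdiffF hIntF hIntF' x
  have hIntProd : Integrable (fun y => 2 * (‖f y‖ * ‖deriv f y‖)) := by
    refine hIntN.mono' ?_ (ae_of_all _ fun y => ?_)
    · exact ((hdiff.continuous.norm.aestronglyMeasurable).mul
        hf'2.aestronglyMeasurable.norm).const_mul 2
    · rw [Real.norm_eq_abs, abs_of_nonneg (by positivity)]
      nlinarith [sq_nonneg (‖f y‖ - ‖deriv f y‖), norm_nonneg (f y), norm_nonneg (deriv f y)]
  have h2 : (∫ y, |deriv F y|) ≤ ∫ y, 2 * (‖f y‖ * ‖deriv f y‖) := by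
    refine integral_mono hIntF'.abs hIntProd fun y => ?_
    simp only [hderivF]
    have hz := hnormsq (f y)
    have hw := hnormsq (deriv f y)
    rw [abs_le]
    constructor <;>
      nlinarith [sq_nonneg ((f y).re * (deriv f y).im - (f y).im * (deriv f y).re),
        sq_nonneg ((f y).re * (deriv f y).im + (f y).im * (deriv f y).re),
        norm_nonneg (f y), norm_nonneg (deriv f y),
        mul_nonneg (norm_nonneg (f y)) (norm_nonneg (deriv f y)),
        sq_nonneg (‖f y‖ * ‖deriv f y‖ - ((f y).re * (deriv f y).re + (f y).im * (deriv f y).im)),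
        sq_nonneg (‖f y‖ * ‖deriv f y‖ + ((f y).re * (deriv f y).re + (f y).im * (deriv f y).im))]
  have hconj : Real.HolderConjugate 2 2 := Real.HolderConjugate.two_two
  have hm1 : MemLp (fun y => ‖f y‖) (ENNReal.ofReal 2) volume := by simpa using hf2.norm
  have hm2 : MemLp (fun y => ‖deriv f y‖) (ENNReal.ofReal 2) volume := by simpa using hf'2.norm
  have hCS0 := integral_mul_le_Lp_mul_Lq_of_nonneg hconj
    (ae_of_all _ fun y => norm_nonneg (f y)) (ae_of_all _ fun y => norm_nonneg (deriv f y))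
    hm1 hm2
  simp_rw [Real.rpow_two] at hCS0
  rw [← Real.sqrt_eq_rpow, ← Real.sqrt_eq_rpow] at hCS0
  calc ‖f x‖ ^ 2 = F x := hFeq x
    _ ≤ |F x| := le_abs_self _
    _ ≤ ∫ y, |deriv F y| := key
    _ ≤ ∫ y, 2 * (‖f y‖ * ‖deriv f y‖) := h2
    _ = 2 * ∫ y, ‖f y‖ * ‖deriv f y‖ := MeasureTheory.integral_const_mul 2 _
    _ ≤ 2 * (Real.sqrt (∫ y, ‖f y‖ ^ 2) * Real.sqrt (∫ y, ‖deriv f y‖ ^ 2)) := by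
        apply mul_le_mul_of_nonneg_left hCS0 (by norm_num)
    _ = 2 * Real.sqrt (∫ y, ‖f y‖ ^ 2) * Real.sqrt (∫ y, ‖deriv f y‖ ^ 2) := by ring

lemma sq_le_of_H1R (g : ℝ → ℝ) (hg : H1R g) (x : ℝ) :
    (g x) ^ 2 ≤ 2 * Real.sqrt (∫ y, (g y) ^ 2) * Real.sqrt (∫ y, (deriv g y) ^ 2) := by
  obtain ⟨hdiff, hg2, hg'2⟩ := hg
  set fc : ℝ → ℂ := fun y => (g y : ℂ) with hfc
  have hdc : ∀ y, HasDerivAt fc ((deriv g y : ℝ) : ℂ) y := fun y => by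
    simpa [hfc, Function.comp_def] using
      Complex.ofRealCLM.hasFDerivAt.comp_hasDerivAt y (hdiff y).hasDerivAt
  have hderiv : deriv fc = fun y => ((deriv g y : ℝ) : ℂ) := funext fun y => (hdc y).deriv
  have hnorm : ∀ y : ℝ, ‖(y : ℂ)‖ ^ 2 = y ^ 2 := fun y => by
    rw [Complex.norm_real, Real.norm_eq_abs, sq_abs]
  have hH1 : H1C fc := by
    refine ⟨fun y => (hdc y).differentiableAt, ?_, ?_⟩
    · rw [memLp_two_iff_integrable_sq_norm]
      · refine (integrable_congr (ae_of_all _ fun y => ?_)).mpr hg2.integrable_sq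
        exact hnorm (g y)
      · exact Complex.continuous_ofReal.comp_aestronglyMeasurable hg2.aestronglyMeasurable
    · rw [hderiv, memLp_two_iff_integrable_sq_norm]
      · refine (integrable_congr (ae_of_all _ fun y => ?_)).mpr hg'2.integrable_sq
        exact hnorm (deriv g y)
      · exact Complex.continuous_ofReal.comp_aestronglyMeasurable hg'2.aestronglyMeasurable
  have h := sq_norm_le_of_H1C fc hH1 x
  rw [hderiv] at h
  simp only [hfc, hnorm] at h
  exact h

lemma rpow_aux {n M r : ℝ} (hn : 0 ≤ n) (hM : n ^ 2 ≤ M) (hr : 0 ≤ r) :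
    n ^ (r + 2) ≤ M ^ (r / 2) * n ^ 2 := by
  have hM0 : 0 ≤ M := le_trans (sq_nonneg n) hM
  rcases hn.eq_or_lt with rfl | hn0
  · rw [Real.zero_rpow (by linarith : r + 2 ≠ 0)]
    positivity
  · have h1 : n ^ (r + 2) = n ^ r * n ^ 2 := by
      rw [Real.rpow_add hn0, Real.rpow_two]
    have h2 : n ^ r = (n ^ 2) ^ (r / 2) := by
      rw [← Real.rpow_two, ← Real.rpow_mul hn]
      congr 1
      ring
    rw [h1, h2]
    exact mul_le_mul_of_nonneg_right (Real.rpow_le_rpow (sq_nonneg n) hM (by linarith))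
      (sq_nonneg n)

lemma IVals_bddBelow (β₁ β₂ α q p : ℝ) (P : ℝ → ℝ) (s t : ℝ)
    (hβ₁ : 0 ≤ β₁) (hβ₂ : 0 ≤ β₂) (hα : 0 ≤ α)
    (hq1 : 1 ≤ q) (hq4 : q < 4) (hp1 : 1 ≤ p) (hp4 : p < 4)
    (hP₁ : ∀ y : ℝ, P y ≤ |y| ^ (p + 2)) (hs : 0 ≤ s) (ht : 0 ≤ t) :
    BddBelow (IVals β₁ β₂ α q P s t) := by
  obtain ⟨C₁, hC₁0, hC₁⟩ := absorb (c := β₁ * (2 * Real.sqrt s) ^ (q / 2) * s) (θ := q / 4)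
    (by positivity) (by linarith) (by linarith)
  obtain ⟨C₂, hC₂0, hC₂⟩ := absorb (c := β₂ * (2 * Real.sqrt t) ^ (p / 2) * t) (θ := p / 4)
    (by positivity) (by linarith) (by linarith)
  obtain ⟨C₃, hC₃0, hC₃⟩ := absorb (c := α * (2 * Real.sqrt t) ^ ((1:ℝ) / 2) * s) (θ := 1 / 4)
    (by positivity) (by norm_num) (by norm_num)
  refine ⟨-(C₁ + C₂ + C₃), fun e he => ?_⟩
  obtain ⟨f, g, hf, hg, hint, hfs, hgt, he⟩ := he
  set X2 := ∫ y, ‖deriv f y‖ ^ 2 with hX2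
  set Y2 := ∫ y, (deriv g y) ^ 2 with hY2
  have hX20 : 0 ≤ X2 := integral_nonneg fun y => by positivity
  have hY20 : 0 ≤ Y2 := integral_nonneg fun y => by positivity
  have hIf2 : Integrable (fun y => ‖f y‖ ^ 2) :=
    (memLp_two_iff_integrable_sq_norm hf.2.1.aestronglyMeasurable).mp hf.2.1
  have hIf'2 : Integrable (fun y => ‖deriv f y‖ ^ 2) :=
    (memLp_two_iff_integrable_sq_norm hf.2.2.aestronglyMeasurable).mp hf.2.2
  have hIg2 : Integrable (fun y => (g y) ^ 2) := hg.2.1.integrable_sq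
  have hIg'2 : Integrable (fun y => (deriv g y) ^ 2) := hg.2.2.integrable_sq
  set Mf := 2 * Real.sqrt s * Real.sqrt X2 with hMfd
  set Mg := 2 * Real.sqrt t * Real.sqrt Y2 with hMgd
  have hMf : ∀ x, ‖f x‖ ^ 2 ≤ Mf := fun x => by
    have := sq_norm_le_of_H1C f hf x; rwa [hfs] at this
  have hMg : ∀ x, (g x) ^ 2 ≤ Mg := fun x => by
    have := sq_le_of_H1R g hg x; rwa [hgt] at this
  have hMf0 : 0 ≤ Mf := by positivity
  have hMg0 : 0 ≤ Mg := by positivity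
  set R : ℝ → ℝ := fun x => β₁ * ‖f x‖ ^ (q + 2) + β₂ * P (g x) + α * ‖f x‖ ^ 2 * g x with hRd
  have hEd : ∀ x, Edens β₁ β₂ α q P f g x
      = (‖deriv f x‖ ^ 2 + (deriv g x) ^ 2) - R x := fun x => by
    simp only [Edens, hRd]; ring
  have hIA : Integrable (fun x => ‖deriv f x‖ ^ 2 + (deriv g x) ^ 2) := hIf'2.add hIg'2
  have hIR : Integrable R := by
    have : R = fun x => (‖deriv f x‖ ^ 2 + (deriv g x) ^ 2) - Edens β₁ β₂ α q P f g x :=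
      funext fun x => by rw [hEd]; ring
    rw [this]; exact hIA.sub hint
  have heval : e = (X2 + Y2) - ∫ x, R x := by
    rw [he, integral_congr_ae (ae_of_all _ hEd), integral_sub hIA hIR,
      integral_add hIf'2 hIg'2]
  set S : ℝ → ℝ := fun x => β₁ * Mf ^ (q / 2) * ‖f x‖ ^ 2 + β₂ * Mg ^ (p / 2) * (g x) ^ 2
    + α * Real.sqrt Mg * ‖f x‖ ^ 2 with hSd
  have hIS : Integrable S := (((hIf2.const_mul _).add (hIg2.const_mul _)).add
    (hIf2.const_mul _))
  have hRS : ∀ x, R x ≤ S x := by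
    intro x
    have h1 : β₁ * ‖f x‖ ^ (q + 2) ≤ β₁ * (Mf ^ (q / 2) * ‖f x‖ ^ 2) :=
      mul_le_mul_of_nonneg_left (rpow_aux (norm_nonneg _) (hMf x) (by linarith)) hβ₁
    have h2 : β₂ * P (g x) ≤ β₂ * (Mg ^ (p / 2) * (g x) ^ 2) := by
      refine mul_le_mul_of_nonneg_left (le_trans (hP₁ (g x)) ?_) hβ₂
      have hM' : |g x| ^ 2 ≤ Mg := by rw [sq_abs]; exact hMg x
      have h := rpow_aux (abs_nonneg (g x)) hM' (by linarith : (0:ℝ) ≤ p)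
      rwa [sq_abs] at h
    have h3 : α * ‖f x‖ ^ 2 * g x ≤ α * Real.sqrt Mg * ‖f x‖ ^ 2 := by
      have habs : g x ≤ Real.sqrt Mg := by
        have h4 : g x ≤ |g x| := le_abs_self _
        have h5 : |g x| = Real.sqrt ((g x) ^ 2) := (Real.sqrt_sq_eq_abs _).symm
        have h6 : Real.sqrt ((g x) ^ 2) ≤ Real.sqrt Mg := Real.sqrt_le_sqrt (hMg x)
        linarith
      calc α * ‖f x‖ ^ 2 * g x ≤ α * ‖f x‖ ^ 2 * Real.sqrt Mg :=
            mul_le_mul_of_nonneg_left habs (by positivity)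
        _ = α * Real.sqrt Mg * ‖f x‖ ^ 2 := by ring
    simp only [hRd, hSd]
    calc β₁ * ‖f x‖ ^ (q + 2) + β₂ * P (g x) + α * ‖f x‖ ^ 2 * g x
        ≤ β₁ * (Mf ^ (q / 2) * ‖f x‖ ^ 2) + β₂ * (Mg ^ (p / 2) * (g x) ^ 2)
          + α * Real.sqrt Mg * ‖f x‖ ^ 2 := by linarith
      _ = β₁ * Mf ^ (q / 2) * ‖f x‖ ^ 2 + β₂ * Mg ^ (p / 2) * (g x) ^ 2
          + α * Real.sqrt Mg * ‖f x‖ ^ 2 := by ring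
  have hintRS : (∫ x, R x) ≤ ∫ x, S x := integral_mono hIR hIS hRS
  have hSval : (∫ x, S x) = β₁ * Mf ^ (q / 2) * s + β₂ * Mg ^ (p / 2) * t
      + α * Real.sqrt Mg * s := by
    have i1 : Integrable (fun x => β₁ * Mf ^ (q / 2) * ‖f x‖ ^ 2) := hIf2.const_mul _
    have i2 : Integrable (fun x => β₂ * Mg ^ (p / 2) * (g x) ^ 2) := hIg2.const_mul _
    have i3 : Integrable (fun x => α * Real.sqrt Mg * ‖f x‖ ^ 2) := hIf2.const_mul _
    have i12 : Integrable (fun x => β₁ * Mf ^ (q / 2) * ‖f x‖ ^ 2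
        + β₂ * Mg ^ (p / 2) * (g x) ^ 2) := by exact i1.add i2
    simp only [hSd]
    rw [integral_add i12 i3, integral_add i1 i2,
      MeasureTheory.integral_const_mul, MeasureTheory.integral_const_mul,
      MeasureTheory.integral_const_mul, hfs, hgt]
  have hMfpow : Mf ^ (q / 2) = (2 * Real.sqrt s) ^ (q / 2) * X2 ^ (q / 4) := by
    rw [hMfd, Real.mul_rpow (by positivity) (Real.sqrt_nonneg _)]
    congr 1
    rw [Real.sqrt_eq_rpow, ← Real.rpow_mul hX20]
    congr 1
    ring
  have hMgpow : Mg ^ (p / 2) = (2 * Real.sqrt t) ^ (p / 2) * Y2 ^ (p / 4) := by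
    rw [hMgd, Real.mul_rpow (by positivity) (Real.sqrt_nonneg _)]
    congr 1
    rw [Real.sqrt_eq_rpow, ← Real.rpow_mul hY20]
    congr 1
    ring
  have hMgsqrt : Real.sqrt Mg = (2 * Real.sqrt t) ^ ((1:ℝ) / 2) * Y2 ^ ((1:ℝ) / 4) := by
    rw [hMgd, Real.sqrt_mul (by positivity)]
    congr 1
    · rw [Real.sqrt_eq_rpow]
    · rw [Real.sqrt_eq_rpow, Real.sqrt_eq_rpow, ← Real.rpow_mul hY20]
      norm_num
  have hb1 : β₁ * Mf ^ (q / 2) * s ≤ X2 / 3 + C₁ := by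
    have := hC₁ X2 hX20
    rw [hMfpow]
    calc β₁ * ((2 * Real.sqrt s) ^ (q / 2) * X2 ^ (q / 4)) * s
        = β₁ * (2 * Real.sqrt s) ^ (q / 2) * s * X2 ^ (q / 4) := by ring
      _ ≤ X2 / 3 + C₁ := this
  have hb2 : β₂ * Mg ^ (p / 2) * t ≤ Y2 / 3 + C₂ := by
    have := hC₂ Y2 hY20
    rw [hMgpow]
    calc β₂ * ((2 * Real.sqrt t) ^ (p / 2) * Y2 ^ (p / 4)) * t
        = β₂ * (2 * Real.sqrt t) ^ (p / 2) * t * Y2 ^ (p / 4) := by ring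
      _ ≤ Y2 / 3 + C₂ := this
  have hb3 : α * Real.sqrt Mg * s ≤ Y2 / 3 + C₃ := by
    have := hC₃ Y2 hY20
    rw [hMgsqrt]
    calc α * ((2 * Real.sqrt t) ^ ((1:ℝ) / 2) * Y2 ^ ((1:ℝ) / 4)) * s
        = α * (2 * Real.sqrt t) ^ ((1:ℝ) / 2) * s * Y2 ^ ((1:ℝ) / 4) := by ring
      _ ≤ Y2 / 3 + C₃ := this
  have : (∫ x, R x) ≤ X2 / 3 + C₁ + (Y2 / 3 + C₂) + (Y2 / 3 + C₃) := by
    rw [hSval] at hintRS; linarith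
  rw [heval]
  linarith

lemma hasDerivAt_gauss (A b x : ℝ) :
    HasDerivAt (fun x => A * Real.exp (b * x ^ 2)) (A * (Real.exp (b * x ^ 2) * (b * (2 * x)))) x := by
  have h1 : HasDerivAt (fun x : ℝ => b * x ^ 2) (b * (2 * x)) x := by
    simpa using (hasDerivAt_pow 2 x).const_mul b
  exact h1.exp.const_mul A

lemma integrable_gauss (A b : ℝ) (hb : b < 0) :
    Integrable (fun x => A * Real.exp (b * x ^ 2)) := by
  have := (integrable_exp_neg_mul_sq (by linarith : (0:ℝ) < -b)).const_mul A
  simpa using this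

lemma integrable_xsq_gauss (A b : ℝ) (hb : b < 0) :
    Integrable (fun x => A * (x ^ 2 * Real.exp (b * x ^ 2))) := by
  have h := integrable_rpow_mul_exp_neg_mul_sq (by linarith : (0:ℝ) < -b)
    (by norm_num : (-1:ℝ) < 2)
  have h2 : Integrable (fun x : ℝ => x ^ 2 * Real.exp (b * x ^ 2)) := by
    refine (integrable_congr (ae_of_all _ fun x => ?_)).mp h
    rw [Real.rpow_two]
    ring_nf
  exact h2.const_mul A

lemma exp_sq (u : ℝ) : Real.exp u ^ 2 = Real.exp (2 * u) := by
  rw [← Real.exp_nat_mul]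
  norm_num

lemma gauss_sq (A c x : ℝ) :
    (A * Real.exp (c * x ^ 2)) ^ 2 = A ^ 2 * Real.exp ((2 * c) * x ^ 2) := by
  rw [mul_pow, exp_sq]
  ring_nf

lemma gauss_deriv_sq (A c x : ℝ) :
    (A * (Real.exp (c * x ^ 2) * (c * (2 * x)))) ^ 2
      = A ^ 2 * (4 * c ^ 2) * (x ^ 2 * Real.exp ((2 * c) * x ^ 2)) := by
  rw [show (A * (Real.exp (c * x ^ 2) * (c * (2 * x)))) ^ 2
      = A ^ 2 * (c ^ 2 * (4 * x ^ 2)) * Real.exp (c * x ^ 2) ^ 2 from by ring, exp_sq]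
  ring

lemma gauss_rpow (A c x r : ℝ) (hA : 0 ≤ A) :
    (A * Real.exp (c * x ^ 2)) ^ r = A ^ r * Real.exp ((r * c) * x ^ 2) := by
  rw [Real.mul_rpow hA (Real.exp_pos _).le, ← Real.exp_mul]
  ring_nf

lemma integral_gauss (A b : ℝ) (hb : 0 < b) :
    ∫ x : ℝ, A * Real.exp (-b * x ^ 2) = A * Real.sqrt (π / b) := by
  rw [MeasureTheory.integral_const_mul, integral_gaussian]

lemma cont_gauss (A c : ℝ) : Continuous fun x : ℝ => A * Real.exp (c * x ^ 2) :=
  continuous_const.mul (Real.continuous_exp.comp (continuous_const.mul (continuous_pow 2)))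

lemma cont_gauss' (A c : ℝ) :
    Continuous fun x : ℝ => A * (Real.exp (c * x ^ 2) * (c * (2 * x))) :=
  continuous_const.mul ((Real.continuous_exp.comp (continuous_const.mul (continuous_pow 2))).mul
    (continuous_const.mul (continuous_const.mul continuous_id)))

set_option maxHeartbeats 1000000 in
lemma trial_neg (β₁ β₂ α q p : ℝ) (P : ℝ → ℝ) (s t : ℝ)
    (hβ₁ : 0 ≤ β₁) (hβ₂ : 0 ≤ β₂) (hα : 0 < α) (hq0 : 0 ≤ q) (hp0 : 0 ≤ p)
    (hP₂ : ∀ y : ℝ, 0 ≤ y → P y = y ^ (p + 2)) (hs : 0 < s) (ht : 0 < t) :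
    ∃ e ∈ IVals β₁ β₂ α q P s t, e < 0 := by
  have hπ : 0 < Real.sqrt π := Real.sqrt_pos.mpr Real.pi_pos
  set a := Real.sqrt (s / Real.sqrt π) with ha
  set b := Real.sqrt (t / Real.sqrt π) with hb
  have ha2 : a ^ 2 = s / Real.sqrt π := Real.sq_sqrt (by positivity)
  have hb2 : b ^ 2 = t / Real.sqrt π := Real.sq_sqrt (by positivity)
  have ha0 : 0 < a := Real.sqrt_pos.mpr (by positivity)
  have hb0 : 0 < b := Real.sqrt_pos.mpr (by positivity)
  set K := ∫ y : ℝ, y ^ 2 * Real.exp (-1 * y ^ 2) with hKdef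
  have hIK : Integrable (fun y : ℝ => y ^ 2 * Real.exp (-1 * y ^ 2)) := by
    simpa using integrable_xsq_gauss 1 (-1) (by norm_num)
  have hK0 : 0 ≤ K := integral_nonneg fun y => by positivity
  set D := (a ^ 2 + b ^ 2) * K with hD
  have hD0 : 0 ≤ D := by positivity
  set c₀ := a ^ 2 * b * Real.sqrt (π / (3 / 2)) with hc₀
  have hc₀0 : 0 < c₀ := by
    have : (0:ℝ) < Real.sqrt (π / (3 / 2)) := Real.sqrt_pos.mpr (by positivity)
    positivity
  set θ := min 1 (α * c₀ / (2 * (D + 1))) with hθdef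
  have hθ0 : 0 < θ := lt_min one_pos (by positivity)
  have hθ1 : θ ≤ 1 := min_le_left _ _
  have hθD : θ * (D + 1) ≤ α * c₀ / 2 := by
    have h := min_le_right 1 (α * c₀ / (2 * (D + 1)))
    calc θ * (D + 1) ≤ α * c₀ / (2 * (D + 1)) * (D + 1) := by
          apply mul_le_mul_of_nonneg_right _ (by linarith)
          exact h
      _ = α * c₀ / 2 := by field_simp
  set A1 := Real.sqrt θ * a with hA1
  set A2 := Real.sqrt θ * b with hA2
  have hsθ : 0 < Real.sqrt θ := Real.sqrt_pos.mpr hθ0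
  have hA10 : 0 < A1 := by positivity
  have hA20 : 0 < A2 := by positivity
  set cθ := -(θ ^ 2) / 2 with hcθ
  have hcθ0 : cθ < 0 := by
    have h := pow_pos hθ0 2
    rw [hcθ]; linarith
  have h2c : 2 * cθ < 0 := by linarith
  have h2ceq : 2 * cθ = -(θ ^ 2) := by rw [hcθ]; ring
  set r : ℝ → ℝ := fun x => A1 * Real.exp (cθ * x ^ 2) with hr
  set G : ℝ → ℝ := fun x => A2 * Real.exp (cθ * x ^ 2) with hG
  set f : ℝ → ℂ := fun x => ((r x : ℝ) : ℂ) with hf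
  set r' : ℝ → ℝ := fun x => A1 * (Real.exp (cθ * x ^ 2) * (cθ * (2 * x))) with hr'
  set G' : ℝ → ℝ := fun x => A2 * (Real.exp (cθ * x ^ 2) * (cθ * (2 * x))) with hG'
  have hrD : ∀ x, HasDerivAt r (r' x) x := fun x => hasDerivAt_gauss A1 cθ x
  have hGD : ∀ x, HasDerivAt G (G' x) x := fun x => hasDerivAt_gauss A2 cθ x
  have hderivr : deriv r = r' := funext fun x => (hrD x).deriv
  have hderivG : deriv G = G' := funext fun x => (hGD x).deriv
  have hfD : ∀ x, HasDerivAt f ((r' x : ℝ) : ℂ) x := fun x => by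
    simpa [Function.comp_def] using
      Complex.ofRealCLM.hasFDerivAt.comp_hasDerivAt x (hrD x)
  have hderivf : deriv f = fun x => ((r' x : ℝ) : ℂ) := funext fun x => (hfD x).deriv
  have hnorm2 : ∀ y : ℝ, ‖(y:ℂ)‖ ^ 2 = y ^ 2 := fun y => by
    rw [Complex.norm_real, Real.norm_eq_abs, sq_abs]
  have hrpos : ∀ x, 0 < r x := fun x => by rw [hr]; positivity
  have hGpos : ∀ x, 0 < G x := fun x => by rw [hG]; positivity
  have hnormf : ∀ x, ‖f x‖ = r x := fun x => by
    rw [hf, Complex.norm_real, Real.norm_eq_abs, abs_of_pos (hrpos x)]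
  -- pointwise formulas
  have hsqf : ∀ x, ‖f x‖ ^ 2 = A1 ^ 2 * Real.exp ((2 * cθ) * x ^ 2) := fun x => by
    rw [hnormf x, hr, gauss_sq]
  have hsqG : ∀ x, (G x) ^ 2 = A2 ^ 2 * Real.exp ((2 * cθ) * x ^ 2) := fun x => by
    rw [hG, gauss_sq]
  have hsqf' : ∀ x, ‖deriv f x‖ ^ 2
      = A1 ^ 2 * (4 * cθ ^ 2) * (x ^ 2 * Real.exp ((2 * cθ) * x ^ 2)) := fun x => by
    simp only [hderivf, hnorm2, hr', gauss_deriv_sq]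
  have hsqG' : ∀ x, (deriv G x) ^ 2
      = A2 ^ 2 * (4 * cθ ^ 2) * (x ^ 2 * Real.exp ((2 * cθ) * x ^ 2)) := fun x => by
    simp only [hderivG, hG', gauss_deriv_sq]
  have hrpowf : ∀ x, ‖f x‖ ^ (q + 2)
      = A1 ^ (q + 2) * Real.exp (((q + 2) * cθ) * x ^ 2) := fun x => by
    rw [hnormf x, hr, gauss_rpow _ _ _ _ hA10.le]
  have hPG : ∀ x, P (G x) = A2 ^ (p + 2) * Real.exp (((p + 2) * cθ) * x ^ 2) := fun x => by
    rw [hP₂ (G x) (hGpos x).le, hG, gauss_rpow _ _ _ _ hA20.le]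
  have hcoup : ∀ x, ‖f x‖ ^ 2 * G x = A1 ^ 2 * A2 * Real.exp ((3 * cθ) * x ^ 2) := fun x => by
    rw [hsqf x, hG]
    calc A1 ^ 2 * Real.exp (2 * cθ * x ^ 2) * (A2 * Real.exp (cθ * x ^ 2))
        = A1 ^ 2 * A2 * (Real.exp (2 * cθ * x ^ 2) * Real.exp (cθ * x ^ 2)) := by ring
      _ = A1 ^ 2 * A2 * Real.exp ((3 * cθ) * x ^ 2) := by
          rw [← Real.exp_add]
          congr 1
          ring
  -- integrability of the pieces
  have i1 : Integrable (fun x => ‖deriv f x‖ ^ 2) :=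
    (integrable_congr (ae_of_all _ hsqf')).mpr (integrable_xsq_gauss _ _ h2c)
  have i2 : Integrable (fun x => (deriv G x) ^ 2) :=
    (integrable_congr (ae_of_all _ hsqG')).mpr (integrable_xsq_gauss _ _ h2c)
  have isqf : Integrable (fun x => ‖f x‖ ^ 2) :=
    (integrable_congr (ae_of_all _ hsqf)).mpr (integrable_gauss _ _ h2c)
  have isqG : Integrable (fun x => (G x) ^ 2) :=
    (integrable_congr (ae_of_all _ hsqG)).mpr (integrable_gauss _ _ h2c)
  have i3 : Integrable (fun x => β₁ * ‖f x‖ ^ (q + 2)) := by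
    refine (integrable_congr (ae_of_all _ fun x => by rw [hrpowf x])).mpr ?_
    exact (integrable_gauss _ _ (mul_neg_of_pos_of_neg (by linarith) hcθ0)).const_mul β₁
  have i4 : Integrable (fun x => β₂ * P (G x)) := by
    refine (integrable_congr (ae_of_all _ fun x => by rw [hPG x])).mpr ?_
    exact (integrable_gauss _ _ (mul_neg_of_pos_of_neg (by linarith) hcθ0)).const_mul β₂
  have i5 : Integrable (fun x => α * (‖f x‖ ^ 2 * G x)) := by
    refine (integrable_congr (ae_of_all _ fun x => by rw [hcoup x])).mpr ?_
    exact (integrable_gauss _ _ (mul_neg_of_pos_of_neg (by norm_num) hcθ0)).const_mul α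
  have hEdeq : ∀ x, Edens β₁ β₂ α q P f G x
      = ‖deriv f x‖ ^ 2 + (deriv G x) ^ 2 - β₁ * ‖f x‖ ^ (q + 2) - β₂ * P (G x)
        - α * (‖f x‖ ^ 2 * G x) := fun x => by
    simp only [Edens]; ring
  have iEd : Integrable (Edens β₁ β₂ α q P f G) := by
    refine (integrable_congr (ae_of_all _ hEdeq)).mpr ?_
    exact ((((i1.add i2).sub i3).sub i4).sub i5)
  -- H1 membership
  have hcontr : Continuous r := by rw [hr]; exact cont_gauss A1 cθ
  have hcontr' : Continuous r' := by rw [hr']; exact cont_gauss' A1 cθ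
  have hcontG : Continuous G := by rw [hG]; exact cont_gauss A2 cθ
  have hcontG' : Continuous G' := by rw [hG']; exact cont_gauss' A2 cθ
  have hH1f : H1C f := by
    refine ⟨fun x => (hfD x).differentiableAt, ?_, ?_⟩
    · rw [memLp_two_iff_integrable_sq_norm]
      · exact isqf
      · exact (Complex.continuous_ofReal.comp hcontr).aestronglyMeasurable
    · rw [hderivf, memLp_two_iff_integrable_sq_norm]
      · refine (integrable_congr (ae_of_all _ fun x => hnorm2 (r' x))).mpr ?_
        have : Integrable (fun x => (r' x) ^ 2) := by
          refine (integrable_congr (ae_of_all _ fun x => by rw [hr', gauss_deriv_sq])).mpr ?_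
          exact integrable_xsq_gauss _ _ h2c
        exact this
      · exact (Complex.continuous_ofReal.comp hcontr').aestronglyMeasurable
  have hH1G : H1R G := by
    refine ⟨fun x => (hGD x).differentiableAt, ?_, ?_⟩
    · rw [memLp_two_iff_integrable_sq hcontG.aestronglyMeasurable]
      exact isqG
    · rw [hderivG, memLp_two_iff_integrable_sq hcontG'.aestronglyMeasurable]
      refine (integrable_congr (ae_of_all _ fun x => by rw [hG', gauss_deriv_sq])).mpr ?_
      exact integrable_xsq_gauss _ _ h2c
  -- integral values
  have hsqrtθ2 : Real.sqrt (θ ^ 2) = θ := Real.sqrt_sq hθ0.le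
  have hsqrtdiv : ∀ u : ℝ, 0 ≤ u → Real.sqrt (u / θ ^ 2) = Real.sqrt u / θ := fun u hu => by
    rw [Real.sqrt_div hu, hsqrtθ2]
  have hIntf2 : (∫ x : ℝ, ‖f x‖ ^ 2) = s := by
    rw [integral_congr_ae (ae_of_all _ hsqf), h2ceq,
      integral_gauss _ _ (by positivity : (0:ℝ) < θ ^ 2),
      hsqrtdiv π Real.pi_pos.le, hA1, mul_pow, Real.sq_sqrt hθ0.le, ha2]
    field_simp
  have hIntG2 : (∫ x : ℝ, (G x) ^ 2) = t := by
    rw [integral_congr_ae (ae_of_all _ hsqG), h2ceq,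
      integral_gauss _ _ (by positivity : (0:ℝ) < θ ^ 2),
      hsqrtdiv π Real.pi_pos.le, hA2, mul_pow, Real.sq_sqrt hθ0.le, hb2]
    field_simp
  have hxsqint : (∫ x : ℝ, x ^ 2 * Real.exp (-θ ^ 2 * x ^ 2)) = θ⁻¹ ^ 2 * (θ⁻¹ * K) := by
    have h1 : ∀ x : ℝ, x ^ 2 * Real.exp (-θ ^ 2 * x ^ 2)
        = θ⁻¹ ^ 2 * ((θ * x) ^ 2 * Real.exp (-1 * (θ * x) ^ 2)) := fun x => by
      rw [show (-1 : ℝ) * (θ * x) ^ 2 = -θ ^ 2 * x ^ 2 from by ring, mul_pow, ← mul_assoc]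
      congr 1
      field_simp
    simp_rw [h1]
    rw [MeasureTheory.integral_const_mul,
      Measure.integral_comp_mul_left (fun y => y ^ 2 * Real.exp (-1 * y ^ 2)) θ,
      abs_of_pos (inv_pos.mpr hθ0), smul_eq_mul]
  have hIf'val : (∫ x : ℝ, ‖deriv f x‖ ^ 2) = θ ^ 2 * a ^ 2 * K := by
    rw [integral_congr_ae (ae_of_all _ hsqf'), MeasureTheory.integral_const_mul, h2ceq,
      show -(θ ^ 2) = -θ ^ 2 from by ring, hxsqint, hA1, hcθ, mul_pow, Real.sq_sqrt hθ0.le]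
    field_simp
    ring
  have hIG'val : (∫ x : ℝ, (deriv G x) ^ 2) = θ ^ 2 * b ^ 2 * K := by
    rw [integral_congr_ae (ae_of_all _ hsqG'), MeasureTheory.integral_const_mul, h2ceq,
      show -(θ ^ 2) = -θ ^ 2 from by ring, hxsqint, hA2, hcθ, mul_pow, Real.sq_sqrt hθ0.le]
    field_simp
    ring
  have hcoupval : (∫ x : ℝ, ‖f x‖ ^ 2 * G x) = Real.sqrt θ * c₀ := by
    rw [integral_congr_ae (ae_of_all _ hcoup),
      show (3 : ℝ) * cθ = -(3 / 2 * θ ^ 2) from by rw [hcθ]; ring,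
      integral_gauss _ _ (by positivity : (0:ℝ) < 3 / 2 * θ ^ 2),
      show π / (3 / 2 * θ ^ 2) = (π / (3 / 2)) / θ ^ 2 from by ring,
      hsqrtdiv (π / (3 / 2)) (by positivity), hA1, hA2, hc₀, mul_pow, Real.sq_sqrt hθ0.le]
    field_simp
  have hB₁ : 0 ≤ ∫ x : ℝ, β₁ * ‖f x‖ ^ (q + 2) :=
    integral_nonneg fun x => by positivity
  have hB₂ : 0 ≤ ∫ x : ℝ, β₂ * P (G x) :=
    integral_nonneg fun x => by rw [hPG x]; positivity
  have hEval : (∫ x : ℝ, Edens β₁ β₂ α q P f G x)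
      = (∫ x : ℝ, ‖deriv f x‖ ^ 2) + (∫ x : ℝ, (deriv G x) ^ 2)
        - (∫ x : ℝ, β₁ * ‖f x‖ ^ (q + 2)) - (∫ x : ℝ, β₂ * P (G x))
        - (∫ x : ℝ, α * (‖f x‖ ^ 2 * G x)) := by
    have j1 : Integrable (fun x => ‖deriv f x‖ ^ 2 + (deriv G x) ^ 2) := by exact i1.add i2
    have j2 : Integrable (fun x => ‖deriv f x‖ ^ 2 + (deriv G x) ^ 2
        - β₁ * ‖f x‖ ^ (q + 2)) := by exact j1.sub i3
    have j3 : Integrable (fun x => ‖deriv f x‖ ^ 2 + (deriv G x) ^ 2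
        - β₁ * ‖f x‖ ^ (q + 2) - β₂ * P (G x)) := by exact j2.sub i4
    rw [integral_congr_ae (ae_of_all _ hEdeq), integral_sub j3 i5, integral_sub j2 i4,
      integral_sub j1 i3, integral_add i1 i2]
  have hcoupval2 : (∫ x : ℝ, α * (‖f x‖ ^ 2 * G x)) = α * (Real.sqrt θ * c₀) := by
    rw [MeasureTheory.integral_const_mul, hcoupval]
  have hEbound : (∫ x : ℝ, Edens β₁ β₂ α q P f G x) ≤ θ ^ 2 * D - α * (Real.sqrt θ * c₀) := by
    rw [hEval, hIf'val, hIG'val, hcoupval2, hD]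
    have hring : θ ^ 2 * a ^ 2 * K + θ ^ 2 * b ^ 2 * K = θ ^ 2 * ((a ^ 2 + b ^ 2) * K) := by ring
    linarith [hB₁, hB₂]
  have hneg : θ ^ 2 * D - α * (Real.sqrt θ * c₀) < 0 := by
    have hsq : Real.sqrt θ ^ 2 = θ := Real.sq_sqrt hθ0.le
    have hsθ1 : Real.sqrt θ ≤ 1 := Real.sqrt_le_one.mpr hθ1
    have hθle : θ ≤ Real.sqrt θ := by
      have h6 : Real.sqrt θ * Real.sqrt θ = θ := Real.mul_self_sqrt hθ0.le
      have h7 : 0 ≤ Real.sqrt θ * (1 - Real.sqrt θ) :=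
        mul_nonneg hsθ.le (by linarith)
      have h8 : Real.sqrt θ * (1 - Real.sqrt θ)
          = Real.sqrt θ - Real.sqrt θ * Real.sqrt θ := by ring
      linarith
    have hθD0 : 0 ≤ θ * D := mul_nonneg hθ0.le hD0
    have h1 : θ ^ 2 * D ≤ Real.sqrt θ * (θ * D) := by
      calc θ ^ 2 * D = θ * (θ * D) := by ring
        _ ≤ Real.sqrt θ * (θ * D) := mul_le_mul_of_nonneg_right hθle hθD0
    have h2 : θ * D ≤ α * c₀ / 2 := by
      have : θ * D ≤ θ * (D + 1) := by
        apply mul_le_mul_of_nonneg_left _ hθ0.le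
        linarith
      linarith
    have h3 : Real.sqrt θ * (θ * D) ≤ Real.sqrt θ * (α * c₀ / 2) :=
      mul_le_mul_of_nonneg_left h2 hsθ.le
    have hαc : 0 < α * c₀ := mul_pos hα hc₀0
    have h4 : Real.sqrt θ * (α * c₀ / 2) < Real.sqrt θ * (α * c₀) := by
      apply mul_lt_mul_of_pos_left _ hsθ
      linarith
    have h5 : α * (Real.sqrt θ * c₀) = Real.sqrt θ * (α * c₀) := by ring
    linarith
  refine ⟨∫ x : ℝ, Edens β₁ β₂ α q P f G x,
    ⟨f, G, hH1f, hH1G, iEd, hIntf2, hIntG2, rfl⟩, lt_of_le_of_lt hEbound hneg⟩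

/-- `I(s,t) < 0` for `s, t > 0`. -/
theorem Ifun_neg (α τ₁ τ₂ p q s t : ℝ)
    (hα : 0 < α) (hτ₁ : 0 ≤ τ₁) (hτ₂ : 0 < τ₂)
    (hq1 : 1 ≤ q) (hq4 : q < 4) (hp1 : 1 ≤ p) (hp4 : p < 4)
    (P : ℝ → ℝ) (hP₁ : ∀ y : ℝ, P y ≤ |y| ^ (p + 2))
    (hP₂ : ∀ y : ℝ, 0 ≤ y → P y = y ^ (p + 2))
    (hs : 0 < s) (ht : 0 < t) :
    Ifun (2 * τ₁ / (q + 2)) (2 * τ₂ / ((p + 1) * (p + 2))) α q P s t < 0 := by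
  have hβ₁ : 0 ≤ 2 * τ₁ / (q + 2) := div_nonneg (by linarith) (by linarith)
  have hβ₂ : 0 ≤ 2 * τ₂ / ((p + 1) * (p + 2)) :=
    div_nonneg (by linarith) (mul_nonneg (by linarith) (by linarith))
  obtain ⟨e, hmem, hneg⟩ := trial_neg (2 * τ₁ / (q + 2)) (2 * τ₂ / ((p + 1) * (p + 2)))
    α q p P s t hβ₁ hβ₂ hα (by linarith) (by linarith) hP₂ hs ht
  have hbdd := IVals_bddBelow (2 * τ₁ / (q + 2)) (2 * τ₂ / ((p + 1) * (p + 2)))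
    α q p P s t hβ₁ hβ₂ hα.le hq1 hq4 hp1 hp4 hP₁ hs.le ht.le
  exact lt_of_le_of_lt (csInf_le hbdd hmem) hneg
end
end
end

section
/- With the hypotheses and definitions of the constrained minimization problem I(s,t) (α > 0, τ₁ ≥ 0, τ₂ > 0, 1 ≤ q < 4, 1 ≤ p < 4), every minimizing sequence (f_n, g_n) for I(s,t) is bounded in Y = H¹_ℂ(ℝ) × H¹(ℝ). -/
open MeasureTheory

noncomputable section

lemma sup_bound (u w : ℝ → ℝ) (hu : Differentiable ℝ u) (h0 : ∀ x, 0 ≤ u x)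
    (hui : Integrable u) (hw : Integrable w) (hd : ∀ x, |deriv u x| ≤ w x) :
    ∀ x, u x ≤ ∫ y, w y := by
  have hw0 : ∀ x, 0 ≤ w x := fun x => (abs_nonneg _).trans (hd x)
  have hdi : Integrable (deriv u) := by
    refine hw.mono' (measurable_deriv u).aestronglyMeasurable ?_
    exact Filter.Eventually.of_forall fun x => by simpa [Real.norm_eq_abs] using hd x
  intro x
  refine le_of_forall_pos_le_add fun ε hε => ?_
  -- find a point where u is small
  have hy : ∃ y, u y < ε := by
    by_contra h
    push_neg at h
    have : Integrable (fun _ : ℝ => ε) := by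
      refine hui.mono' aestronglyMeasurable_const ?_
      exact Filter.Eventually.of_forall fun y => by
        rw [Real.norm_eq_abs, abs_of_pos hε]; exact h y
    rcases integrable_const_iff.mp this with h' | h'
    · exact hε.ne' h'
    · haveI := h'; have hlt := measure_lt_top (volume : Measure ℝ) Set.univ
      rw [Real.volume_univ] at hlt; exact lt_irrefl _ hlt
  obtain ⟨y, hyε⟩ := hy
  have hftc : ∫ z in y..x, deriv u z = u x - u y :=
    intervalIntegral.integral_deriv_eq_sub (fun t _ => hu t) (hdi.intervalIntegrable)
  have h1 : u x - u y ≤ |∫ z in y..x, deriv u z| := by rw [hftc]; exact le_abs_self _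
  have h2 : |∫ z in y..x, deriv u z| ≤ ∫ z in Set.uIoc y x, |deriv u z| := by
    simpa [Real.norm_eq_abs] using
      intervalIntegral.norm_integral_le_integral_norm_uIoc (a := y) (b := x) (f := deriv u) (μ := volume)
  have h3 : ∫ z in Set.uIoc y x, |deriv u z| ≤ ∫ z in Set.uIoc y x, w z := by
    refine setIntegral_mono_on (hdi.abs.integrableOn) (hw.integrableOn) measurableSet_uIoc ?_
    exact fun z _ => hd z
  have h4 : ∫ z in Set.uIoc y x, w z ≤ ∫ z, w z :=
    setIntegral_le_integral hw (Filter.Eventually.of_forall hw0)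
  have := h0 y
  linarith

lemma int_sq {E : Type*} [NormedAddCommGroup E] (f : ℝ → E) (hf : MemLp f 2 (volume : Measure ℝ)) :
    Integrable (fun x => ‖f x‖ ^ 2) := by
  have h := hf.integrable_norm_rpow two_ne_zero ENNReal.ofNat_ne_top
  have e : ∀ x : ℝ, ‖f x‖ ^ ((2:ENNReal).toReal) = ‖f x‖ ^ 2 := by
    intro x
    rw [ENNReal.toReal_ofNat, show ((2:ℝ)) = ((2:ℕ):ℝ) by norm_num, Real.rpow_natCast]
  simpa [e] using h

lemma young_div (A B m : ℝ) (hm : 0 < m) : 2*A*B ≤ m*A^2 + (1/m)*B^2 := by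
  have h : m*A^2 + (1/m)*B^2 - 2*A*B = (1/m) * (m*A - B)^2 := by
    field_simp; ring
  nlinarith [mul_nonneg (le_of_lt (one_div_pos.mpr hm)) (sq_nonneg (m*A - B))]

lemma supC_param (f : ℝ → ℂ) (hf : H1C f) (m : ℝ) (hm : 0 < m) :
    ∀ x, ‖f x‖ ^ 2 ≤ m * (∫ y, ‖f y‖ ^ 2) + (1/m) * (∫ y, ‖deriv f y‖ ^ 2) := by
  obtain ⟨hdiff, hL2, hL2'⟩ := hf
  have Ia : Integrable (fun x => ‖f x‖ ^ 2) := int_sq f hL2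
  have Ic : Integrable (fun x => ‖deriv f x‖ ^ 2) := int_sq (deriv f) hL2'
  set u : ℝ → ℝ := fun x => ‖f x‖ ^ 2 with hu_def
  have hkey : ∀ x, HasDerivAt u
      (2*(f x).re*(deriv f x).re + 2*(f x).im*(deriv f x).im) x := by
    intro x
    have hfd : HasDerivAt f (deriv f x) x := (hdiff x).hasDerivAt
    have hre : HasDerivAt (fun x => (f x).re) ((deriv f x).re) x :=
      (Complex.reCLM.hasFDerivAt.comp_hasDerivAt x hfd)
    have him : HasDerivAt (fun x => (f x).im) ((deriv f x).im) x :=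
      (Complex.imCLM.hasFDerivAt.comp_hasDerivAt x hfd)
    have h1 : HasDerivAt (fun x => (f x).re ^ 2 + (f x).im ^ 2)
        (2*(f x).re*(deriv f x).re + 2*(f x).im*(deriv f x).im) x := by
      have := (hre.pow 2).add (him.pow 2)
      exact this.congr_deriv (by norm_num)
    have heq : (fun x => (f x).re ^ 2 + (f x).im ^ 2) = u := by
      funext z
      rw [hu_def]
      simp [Complex.sq_norm, Complex.normSq_apply]
      ring
    rwa [heq] at h1
  have hudiff : Differentiable ℝ u := fun x => (hkey x).differentiableAt
  set w : ℝ → ℝ := fun x => m * ‖f x‖ ^ 2 + (1/m) * ‖deriv f x‖ ^ 2 with hw_def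
  have hw : Integrable w := (Ia.const_mul m).add (Ic.const_mul (1/m))
  have hd : ∀ x, |deriv u x| ≤ w x := by
    intro x
    rw [(hkey x).deriv]
    have hf2 : ‖f x‖ ^ 2 = (f x).re ^ 2 + (f x).im ^ 2 := by
      simp [Complex.sq_norm, Complex.normSq_apply]; ring
    have hf2' : ‖deriv f x‖ ^ 2 = (deriv f x).re ^ 2 + (deriv f x).im ^ 2 := by
      simp [Complex.sq_norm, Complex.normSq_apply]; ring
    rw [abs_le, hw_def]
    constructor
    · have h1 := young_div (f x).re (-(deriv f x).re) m hm
      have h2 := young_div (f x).im (-(deriv f x).im) m hm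
      simp only [hf2, hf2']
      nlinarith
    · have h1 := young_div (f x).re ((deriv f x).re) m hm
      have h2 := young_div (f x).im ((deriv f x).im) m hm
      simp only [hf2, hf2']
      nlinarith
  intro x
  have := sup_bound u w hudiff (fun x => by positivity) Ia hw hd x
  calc ‖f x‖ ^ 2 = u x := rfl
    _ ≤ ∫ y, w y := this
    _ = m * (∫ y, ‖f y‖ ^ 2) + (1/m) * (∫ y, ‖deriv f y‖ ^ 2) := by
        rw [hw_def, integral_add (Ia.const_mul m) (Ic.const_mul (1/m)),
          MeasureTheory.integral_const_mul, MeasureTheory.integral_const_mul]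

lemma supR_param (g : ℝ → ℝ) (hg : H1R g) (m : ℝ) (hm : 0 < m) :
    ∀ x, (g x) ^ 2 ≤ m * (∫ y, (g y) ^ 2) + (1/m) * (∫ y, (deriv g y) ^ 2) := by
  obtain ⟨hdiff, hL2, hL2'⟩ := hg
  have Ia : Integrable (fun x => (g x) ^ 2) := by
    simpa [Real.norm_eq_abs, sq_abs] using int_sq g hL2
  have Ic : Integrable (fun x => (deriv g x) ^ 2) := by
    simpa [Real.norm_eq_abs, sq_abs] using int_sq (deriv g) hL2'
  set u : ℝ → ℝ := fun x => (g x) ^ 2 with hu_def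
  have hkey : ∀ x, HasDerivAt u (2 * g x * deriv g x) x := by
    intro x
    have := ((hdiff x).hasDerivAt.pow 2)
    exact this.congr_deriv (by norm_num)
  have hudiff : Differentiable ℝ u := fun x => (hkey x).differentiableAt
  set w : ℝ → ℝ := fun x => m * (g x) ^ 2 + (1/m) * (deriv g x) ^ 2 with hw_def
  have hw : Integrable w := (Ia.const_mul m).add (Ic.const_mul (1/m))
  have hd : ∀ x, |deriv u x| ≤ w x := by
    intro x
    rw [(hkey x).deriv, abs_le, hw_def]
    constructor
    · have h1 := young_div (g x) (-(deriv g x)) m hm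
      nlinarith
    · have h1 := young_div (g x) (deriv g x) m hm
      nlinarith
  intro x
  calc (g x) ^ 2 = u x := rfl
    _ ≤ ∫ y, w y := sup_bound u w hudiff (fun x => by positivity) Ia hw hd x
    _ = m * (∫ y, (g y) ^ 2) + (1/m) * (∫ y, (deriv g y) ^ 2) := by
        rw [hw_def, integral_add (Ia.const_mul m) (Ic.const_mul (1/m)),
          MeasureTheory.integral_const_mul, MeasureTheory.integral_const_mul]

lemma opt_bound (a c v : ℝ) (ha : 0 ≤ a) (hc : 0 ≤ c)
    (h : ∀ m : ℝ, 0 < m → v ≤ m * a + (1/m) * c) :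
    v ≤ 2 * Real.sqrt (a+1) * Real.sqrt (c+1) := by
  have hsa : 0 < Real.sqrt (a+1) := Real.sqrt_pos.mpr (by linarith)
  have hsc : 0 < Real.sqrt (c+1) := Real.sqrt_pos.mpr (by linarith)
  have e1 : Real.sqrt (a+1) * Real.sqrt (a+1) = a+1 := Real.mul_self_sqrt (by linarith)
  have e2 : Real.sqrt (c+1) * Real.sqrt (c+1) = c+1 := Real.mul_self_sqrt (by linarith)
  have hm : 0 < Real.sqrt (c+1) / Real.sqrt (a+1) := div_pos hsc hsa
  have h1 := h _ hm
  have key : (Real.sqrt (c+1) / Real.sqrt (a+1)) * a +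
      (1/(Real.sqrt (c+1) / Real.sqrt (a+1))) * c
      ≤ 2 * Real.sqrt (a+1) * Real.sqrt (c+1) := by
    rw [one_div_div, div_mul_eq_mul_div, div_mul_eq_mul_div,
      div_add_div _ _ (ne_of_gt hsa) (ne_of_gt hsc), div_le_iff₀ (by positivity)]
    nlinarith [mul_pos hsa hsc, mul_nonneg ha hc]
  linarith

lemma key_estimate (β₁ β₂ α q p : ℝ) (P : ℝ → ℝ) (hβ₁ : 0 ≤ β₁) (hβ₂ : 0 ≤ β₂) (hα : 0 ≤ α)
    (hq : 0 ≤ q) (hp : 0 ≤ p) (hP₁ : ∀ y, P y ≤ |y| ^ (p+2))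
    (f : ℝ → ℂ) (g : ℝ → ℝ) (hf : H1C f) (hg : H1R g)
    (hEint : Integrable (Edens β₁ β₂ α q P f g))
    (κ : ℝ) (hκ : 0 ≤ κ)
    (hbf : ∀ x, ‖f x‖ ≤ κ) (hbg : ∀ x, |g x| ≤ κ) :
    (∫ x, ‖deriv f x‖ ^ 2) + (∫ x, (deriv g x) ^ 2) ≤ (∫ x, Edens β₁ β₂ α q P f g x)
      + (β₁ * κ ^ q + α * κ) * (∫ x, ‖f x‖ ^ 2) + β₂ * κ ^ p * (∫ x, (g x) ^ 2) := by
  have Ia : Integrable (fun x => ‖f x‖ ^ 2) := int_sq f hf.2.1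
  have Ic : Integrable (fun x => ‖deriv f x‖ ^ 2) := int_sq (deriv f) hf.2.2
  have Ib : Integrable (fun x => (g x) ^ 2) := by
    simpa [Real.norm_eq_abs, sq_abs] using int_sq g hg.2.1
  have Id : Integrable (fun x => (deriv g x) ^ 2) := by
    simpa [Real.norm_eq_abs, sq_abs] using int_sq (deriv g) hg.2.2
  set D : ℝ → ℝ := fun x => ‖deriv f x‖ ^ 2 + (deriv g x) ^ 2 with hD_def
  have ID : Integrable D := Ic.add Id
  set N : ℝ → ℝ := fun x => D x - Edens β₁ β₂ α q P f g x with hN_def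
  have IN : Integrable N := ID.sub hEint
  set W : ℝ → ℝ := fun x => (β₁ * κ ^ q + α * κ) * ‖f x‖ ^ 2 + (β₂ * κ ^ p) * (g x) ^ 2
    with hW_def
  have IW : Integrable W := (Ia.const_mul _).add (Ib.const_mul _)
  have hNW : ∀ x, N x ≤ W x := by
    intro x
    have hNx : N x = β₁ * ‖f x‖ ^ (q+2) + β₂ * P (g x) + α * ‖f x‖ ^ 2 * g x := by
      simp only [hN_def, hD_def, Edens]; ring
    have t1 : ‖f x‖ ^ (q+2) ≤ κ ^ q * ‖f x‖ ^ 2 := by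
      rw [Real.rpow_add' (norm_nonneg _) (by linarith : q + 2 ≠ 0)]
      have h2 : ‖f x‖ ^ (2:ℝ) = ‖f x‖ ^ 2 := by
        rw [show ((2:ℝ)) = ((2:ℕ):ℝ) by norm_num, Real.rpow_natCast]
      rw [h2]
      exact mul_le_mul_of_nonneg_right (Real.rpow_le_rpow (norm_nonneg _) (hbf x) hq)
        (by positivity)
    have t2 : P (g x) ≤ κ ^ p * (g x) ^ 2 := by
      refine (hP₁ (g x)).trans ?_
      rw [Real.rpow_add' (abs_nonneg _) (by linarith : p + 2 ≠ 0)]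
      have h2 : |g x| ^ (2:ℝ) = (g x) ^ 2 := by
        rw [show ((2:ℝ)) = ((2:ℕ):ℝ) by norm_num, Real.rpow_natCast, sq_abs]
      rw [h2]
      exact mul_le_mul_of_nonneg_right (Real.rpow_le_rpow (abs_nonneg _) (hbg x) hp)
        (by positivity)
    have t3 : ‖f x‖ ^ 2 * g x ≤ κ * ‖f x‖ ^ 2 := by
      have : ‖f x‖ ^ 2 * g x ≤ ‖f x‖ ^ 2 * |g x| :=
        mul_le_mul_of_nonneg_left (le_abs_self _) (by positivity)
      calc ‖f x‖ ^ 2 * g x ≤ ‖f x‖ ^ 2 * |g x| := this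
        _ ≤ ‖f x‖ ^ 2 * κ := mul_le_mul_of_nonneg_left (hbg x) (by positivity)
        _ = κ * ‖f x‖ ^ 2 := by ring
    have hW : W x = (β₁ * κ ^ q + α * κ) * ‖f x‖ ^ 2 + (β₂ * κ ^ p) * (g x) ^ 2 := rfl
    rw [hNx, hW]
    nlinarith [mul_le_mul_of_nonneg_left t1 hβ₁, mul_le_mul_of_nonneg_left t2 hβ₂,
      mul_le_mul_of_nonneg_left t3 hα]
  have hsplit : ∫ x, Edens β₁ β₂ α q P f g x = (∫ x, D x) - ∫ x, N x := by
    rw [← integral_sub ID IN]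
    congr 1
    funext x
    simp [hN_def]
  have hINW : ∫ x, N x ≤ ∫ x, W x := integral_mono IN IW hNW
  have hWval : ∫ x, W x = (β₁ * κ ^ q + α * κ) * (∫ x, ‖f x‖ ^ 2)
      + (β₂ * κ ^ p) * (∫ x, (g x) ^ 2) := by
    rw [hW_def, integral_add (Ia.const_mul _) (Ib.const_mul _),
      MeasureTheory.integral_const_mul, MeasureTheory.integral_const_mul]
  have hDval : ∫ x, D x = (∫ x, ‖deriv f x‖ ^ 2) + ∫ x, (deriv g x) ^ 2 :=
    integral_add Ic Id
  linarith [hsplit, hINW]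

lemma bootstrap (r c₁ c₂ : ℝ) (hr0 : 0 ≤ r) (hr : r < 4) (hc₂ : 0 < c₂) :
    ∃ B : ℝ, ∀ κ : ℝ, 1 ≤ κ → κ ^ (4:ℕ) ≤ c₁ + c₂ * κ ^ r → κ ^ (4:ℕ) ≤ B := by
  set T : ℝ := (2*c₂) ^ ((4-r)⁻¹) with hT
  refine ⟨max ((max T 1) ^ (4:ℕ)) (2*c₁), fun κ hκ hineq => ?_⟩
  have hκ0 : (0:ℝ) < κ := lt_of_lt_of_le one_pos hκ
  by_cases hcase : κ ≤ T
  · refine le_max_of_le_left ?_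
    exact pow_le_pow_left₀ (by linarith) (le_max_of_le_left hcase) 4
  · push_neg at hcase
    refine le_max_of_le_right ?_
    have h4r : (0:ℝ) < 4 - r := by linarith
    have h1 : 2*c₂ ≤ κ ^ (4-r) := by
      have e : T ^ (4-r) = 2*c₂ :=
        Real.rpow_inv_rpow (by positivity) (ne_of_gt h4r)
      calc 2*c₂ = T ^ (4-r) := e.symm
        _ ≤ κ ^ (4-r) := Real.rpow_le_rpow (Real.rpow_nonneg (by positivity) _)
            hcase.le h4r.le
    have h2 : κ ^ r * κ ^ (4-r) = κ ^ (4:ℕ) := by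
      rw [← Real.rpow_add hκ0, ← Real.rpow_natCast κ 4]
      norm_num
    have h3 : κ ^ r * (2*c₂) ≤ κ ^ (4:ℕ) := by
      rw [← h2]
      exact mul_le_mul_of_nonneg_left h1 (Real.rpow_nonneg hκ0.le _)
    nlinarith [Real.rpow_nonneg hκ0.le r]

/-- Every minimizing sequence for `I(s,t)` is bounded in `Y = H¹_ℂ × H¹`. -/
theorem minimizing_seq_bounded (α τ₁ τ₂ p q s t : ℝ)
    (hα : 0 < α) (hτ₁ : 0 ≤ τ₁) (hτ₂ : 0 < τ₂)
    (hq1 : 1 ≤ q) (hq4 : q < 4) (hp1 : 1 ≤ p) (hp4 : p < 4)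
    (P : ℝ → ℝ) (hP₁ : ∀ y : ℝ, P y ≤ |y| ^ (p + 2))
    (hP₂ : ∀ y : ℝ, 0 ≤ y → P y = y ^ (p + 2))
    (hs : 0 < s) (ht : 0 < t)
    (f : ℕ → ℝ → ℂ) (g : ℕ → ℝ → ℝ)
    (hmem : ∀ n, H1C (f n) ∧ H1R (g n) ∧
      Integrable (Edens (2 * τ₁ / (q + 2)) (2 * τ₂ / ((p + 1) * (p + 2))) α q P (f n) (g n)))
    (hfs : Filter.Tendsto (fun n => ∫ x : ℝ, ‖f n x‖ ^ 2) Filter.atTop (nhds s))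
    (hgt : Filter.Tendsto (fun n => ∫ x : ℝ, (g n x) ^ 2) Filter.atTop (nhds t))
    (hE : Filter.Tendsto
      (fun n => ∫ x : ℝ, Edens (2 * τ₁ / (q + 2)) (2 * τ₂ / ((p + 1) * (p + 2))) α q P (f n) (g n) x)
      Filter.atTop
      (nhds (Ifun (2 * τ₁ / (q + 2)) (2 * τ₂ / ((p + 1) * (p + 2))) α q P s t))) :
    ∃ C : ℝ, ∀ n,
      (∫ x : ℝ, ‖f n x‖ ^ 2) + (∫ x : ℝ, ‖deriv (f n) x‖ ^ 2) +
        (∫ x : ℝ, (g n x) ^ 2) + (∫ x : ℝ, (deriv (g n) x) ^ 2) ≤ C := by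
  set β₁ : ℝ := 2 * τ₁ / (q + 2) with hβ₁def
  set β₂ : ℝ := 2 * τ₂ / ((p + 1) * (p + 2)) with hβ₂def
  have hβ₁ : 0 ≤ β₁ := div_nonneg (by linarith) (by linarith)
  have hβ₂ : 0 ≤ β₂ := div_nonneg (by linarith) (by nlinarith)
  -- uniform bounds on the constrained norms and the energies
  obtain ⟨A₁, hA₁⟩ := hfs.bddAbove_range
  obtain ⟨A₂, hA₂⟩ := hgt.bddAbove_range
  obtain ⟨M, hM⟩ := hE.bddAbove_range
  have hA₁' : ∀ n, (∫ x : ℝ, ‖f n x‖ ^ 2) ≤ A₁ := fun n => hA₁ ⟨n, rfl⟩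
  have hA₂' : ∀ n, (∫ x : ℝ, (g n x) ^ 2) ≤ A₂ := fun n => hA₂ ⟨n, rfl⟩
  have hM' : ∀ n, (∫ x : ℝ, Edens β₁ β₂ α q P (f n) (g n) x) ≤ M := fun n => hM ⟨n, rfl⟩
  set A : ℝ := max (max A₁ A₂) 0 with hAdef
  have hA0 : 0 ≤ A := le_max_right _ _
  set r : ℝ := max (max q p) 1 with hrdef
  have hr1 : 1 ≤ r := le_max_right _ _
  have hr4 : r < 4 := max_lt (max_lt hq4 hp4) (by norm_num)
  set Cc : ℝ := (β₁ + β₂ + α) * A with hCcdef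
  have hCc0 : 0 ≤ Cc := mul_nonneg (by linarith) hA0
  set c₁ : ℝ := 4 * (A+1) * (M+1) with hc₁def
  set c₂ : ℝ := 4 * (A+1) * Cc + 1 with hc₂def
  have hc₂0 : 0 < c₂ := by
    have h1 : 0 ≤ 4*(A+1)*Cc := mul_nonneg (mul_nonneg (by norm_num) (by linarith)) hCc0
    rw [hc₂def]; linarith
  obtain ⟨B, hB⟩ := bootstrap r c₁ c₂ (by linarith) hr4 hc₂0
  refine ⟨A + A + B, fun n => ?_⟩
  obtain ⟨hfH, hgH, hEint⟩ := hmem n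
  set a : ℝ := ∫ x : ℝ, ‖f n x‖ ^ 2 with hadef
  set b : ℝ := ∫ x : ℝ, (g n x) ^ 2 with hbdef
  set c : ℝ := ∫ x : ℝ, ‖deriv (f n) x‖ ^ 2 with hcdef
  set d : ℝ := ∫ x : ℝ, (deriv (g n) x) ^ 2 with hddef
  have ha0 : 0 ≤ a := integral_nonneg fun x => by positivity
  have hb0 : 0 ≤ b := integral_nonneg fun x => by positivity
  have hc0 : 0 ≤ c := integral_nonneg fun x => by positivity
  have hd0 : 0 ≤ d := integral_nonneg fun x => by positivity
  have haA : a ≤ A := (hA₁' n).trans (le_max_of_le_left (le_max_left _ _))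
  have hbA : b ≤ A := (hA₂' n).trans (le_max_of_le_left (le_max_right _ _))
  set X : ℝ := c + d with hXdef
  have hX0 : 0 ≤ X := by positivity
  set K : ℝ := 2 * Real.sqrt (A+1) * Real.sqrt (X+1) with hKdef
  have hsA1 : 1 ≤ Real.sqrt (A+1) := by
    have := Real.sqrt_le_sqrt (show (1:ℝ) ≤ A+1 by linarith)
    simpa using this
  have hsX1 : 1 ≤ Real.sqrt (X+1) := by
    have := Real.sqrt_le_sqrt (show (1:ℝ) ≤ X+1 by linarith)
    simpa using this
  have hK1 : 1 ≤ K := by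
    have h1 : (1:ℝ)*1 ≤ Real.sqrt (A+1) * Real.sqrt (X+1) :=
      mul_le_mul hsA1 hsX1 zero_le_one (zero_le_one.trans hsA1)
    rw [hKdef]; linarith
  have hK0 : 0 ≤ K := by linarith
  set κ : ℝ := Real.sqrt K with hκdef
  have hκ1 : 1 ≤ κ := by
    have := Real.sqrt_le_sqrt hK1
    simpa [hκdef] using this
  have hκsq : κ ^ 2 = K := Real.sq_sqrt hK0
  have hκ4 : κ ^ (4:ℕ) = 4 * (A+1) * (X+1) := by
    have e1 : Real.sqrt (A+1) ^ 2 = A+1 := Real.sq_sqrt (by linarith)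
    have e2 : Real.sqrt (X+1) ^ 2 = X+1 := Real.sq_sqrt (by linarith)
    have h4 : κ ^ (4:ℕ) = (κ ^ 2) ^ 2 := by ring
    rw [h4, hκsq, hKdef, mul_pow, mul_pow, e1, e2]
    ring
  -- pointwise sup bounds
  have hsupf : ∀ x, ‖f n x‖ ^ 2 ≤ K := by
    intro x
    have h := opt_bound a c (‖f n x‖ ^ 2) ha0 hc0
      (fun m hm => supC_param (f n) hfH m hm x)
    refine h.trans ?_
    have m1 : Real.sqrt (a+1) ≤ Real.sqrt (A+1) := Real.sqrt_le_sqrt (by linarith)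
    have m2 : Real.sqrt (c+1) ≤ Real.sqrt (X+1) := Real.sqrt_le_sqrt (by
      rw [hXdef]; linarith)
    rw [hKdef]
    exact mul_le_mul (mul_le_mul_of_nonneg_left m1 (by norm_num)) m2
      (Real.sqrt_nonneg _) (by positivity)
  have hsupg : ∀ x, (g n x) ^ 2 ≤ K := by
    intro x
    have h := opt_bound b d ((g n x) ^ 2) hb0 hd0
      (fun m hm => supR_param (g n) hgH m hm x)
    refine h.trans ?_
    have m1 : Real.sqrt (b+1) ≤ Real.sqrt (A+1) := Real.sqrt_le_sqrt (by linarith)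
    have m2 : Real.sqrt (d+1) ≤ Real.sqrt (X+1) := Real.sqrt_le_sqrt (by
      rw [hXdef]; linarith)
    rw [hKdef]
    exact mul_le_mul (mul_le_mul_of_nonneg_left m1 (by norm_num)) m2
      (Real.sqrt_nonneg _) (by positivity)
  have hbf : ∀ x, ‖f n x‖ ≤ κ := by
    intro x
    rw [hκdef, show ‖f n x‖ = Real.sqrt (‖f n x‖ ^ 2) from (Real.sqrt_sq (norm_nonneg _)).symm]
    exact Real.sqrt_le_sqrt (hsupf x)
  have hbg : ∀ x, |g n x| ≤ κ := by
    intro x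
    rw [hκdef, show |g n x| = Real.sqrt ((g n x) ^ 2) from (Real.sqrt_sq_eq_abs _).symm]
    exact Real.sqrt_le_sqrt (hsupg x)
  -- the key energy estimate
  have hkey := key_estimate β₁ β₂ α q p P hβ₁ hβ₂ hα.le (by linarith) (by linarith) hP₁
    (f n) (g n) hfH hgH hEint κ (by linarith) hbf hbg
  -- bound the nonlinear terms
  have hκr0 : 0 ≤ κ ^ r := Real.rpow_nonneg (by linarith) _
  have hqr : κ ^ q ≤ κ ^ r := Real.rpow_le_rpow_of_exponent_le hκ1
    (le_max_of_le_left (le_max_left _ _))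
  have hpr : κ ^ p ≤ κ ^ r := Real.rpow_le_rpow_of_exponent_le hκ1
    (le_max_of_le_left (le_max_right _ _))
  have h1r : κ ≤ κ ^ r := by
    calc κ = κ ^ (1:ℝ) := (Real.rpow_one κ).symm
      _ ≤ κ ^ r := Real.rpow_le_rpow_of_exponent_le hκ1 hr1
  have s1 : β₁ * (κ ^ q * a) ≤ β₁ * (κ ^ r * A) :=
    mul_le_mul_of_nonneg_left (mul_le_mul hqr haA ha0 hκr0) hβ₁
  have s2 : α * (κ * a) ≤ α * (κ ^ r * A) :=
    mul_le_mul_of_nonneg_left (mul_le_mul h1r haA ha0 hκr0) hα.le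
  have s3 : β₂ * (κ ^ p * b) ≤ β₂ * (κ ^ r * A) :=
    mul_le_mul_of_nonneg_left (mul_le_mul hpr hbA hb0 hκr0) hβ₂
  have hXbound : X ≤ M + Cc * κ ^ r := by
    have hEn := hM' n
    have expand : (β₁ * κ ^ q + α * κ) * a + β₂ * κ ^ p * b
        = β₁ * (κ ^ q * a) + α * (κ * a) + β₂ * (κ ^ p * b) := by ring
    have tgt : Cc * κ ^ r = β₁ * (κ ^ r * A) + β₂ * (κ ^ r * A) + α * (κ ^ r * A) := by
      rw [hCcdef]; ring
    rw [hXdef]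
    linarith [hkey, expand, tgt, s1, s2, s3]
  -- bootstrap
  have hκineq : κ ^ (4:ℕ) ≤ c₁ + c₂ * κ ^ r := by
    have hstep : 4*(A+1)*(X+1) ≤ 4*(A+1)*((M + Cc * κ ^ r)+1) :=
      mul_le_mul_of_nonneg_left (by linarith [hXbound])
        (mul_nonneg (by norm_num) (by linarith))
    have expand : 4*(A+1)*((M + Cc * κ ^ r)+1) = 4*(A+1)*(M+1) + (4*(A+1)*Cc)*κ ^ r := by
      ring
    have hlast : (4*(A+1)*Cc)*κ ^ r ≤ (4*(A+1)*Cc+1)*κ ^ r :=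
      mul_le_mul_of_nonneg_right (by linarith) hκr0
    rw [hκ4, hc₁def, hc₂def]
    linarith [hstep, expand, hlast]
  have hκB := hB κ hκ1 hκineq
  have hXB : X ≤ B := by
    have expand2 : 4*(A+1)*(X+1) = 4*(A*X) + 4*A + 4*X + 4 := by ring
    have hAX : 0 ≤ A*X := mul_nonneg hA0 hX0
    linarith [hκB, hκ4, expand2, hAX, hX0]
  calc a + c + b + d = a + b + X := by rw [hXdef]; ring
    _ ≤ A + A + B := by linarith
end
end

section
/- Suppose s > 0, t ∈ ℝ, 1 ≤ q < 4, 1 ≤ p < 4/3, β₁ = 2τ₁/(q+2), β₂ = 2τ₂/((p+1)(p+2)) with τ₁ ≥ 0, τ₂ > 0, α > 0. If (h_n, g_n) is a minimizing sequence for W(s,t) = inf{E(h,g) : H(h) = s, G(h,g) = t}, then (h_n, g_n) is bounded in Y = H¹_ℂ(ℝ) × H¹(ℝ). -/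
open MeasureTheory

noncomputable section

def Gval (h : ℝ → ℂ) (g : ℝ → ℝ) : ℝ :=
  (∫ x : ℝ, (g x) ^ 2) + (∫ x : ℝ, h x * (starRingEnd ℂ) (deriv h x)).im

def Hval (h : ℝ → ℂ) : ℝ := ∫ x : ℝ, ‖h x‖ ^ 2

/-- The set of energies of admissible pairs with `H(h) = s`, `G(h,g) = t`. -/
def WVals (β₁ β₂ α q : ℝ) (P : ℝ → ℝ) (s t : ℝ) : Set ℝ :=
  { e | ∃ h : ℝ → ℂ, ∃ g : ℝ → ℝ, H1C h ∧ H1R g ∧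
      Integrable (Edens β₁ β₂ α q P h g) ∧
      Hval h = s ∧ Gval h g = t ∧
      e = ∫ x : ℝ, Edens β₁ β₂ α q P h g x }

/-- The constrained infimum `W(s,t)`. -/
def Wfun (β₁ β₂ α q : ℝ) (P : ℝ → ℝ) (s t : ℝ) : ℝ :=
  sInf (WVals β₁ β₂ α q P s t)


open Filter Set Real
open scoped RealInnerProductSpace ENNReal


namespace WAux

variable {E : Type*} [NormedAddCommGroup E] [InnerProductSpace ℝ E]
  [CompleteSpace E] [SecondCountableTopology E]

lemma memL2_integrable_sq {f : ℝ → E} (hf : MemLp f 2 (volume : Measure ℝ)) :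
    Integrable (fun x => ‖f x‖ ^ 2) := by
  have h := hf.integrable_norm_rpow (by norm_num) (by norm_num)
  have : (fun x => ‖f x‖ ^ (2 : ℝ≥0∞).toReal) = fun x => ‖f x‖ ^ 2 := by
    funext x
    rw [show (2 : ℝ≥0∞).toReal = ((2 : ℕ) : ℝ) by norm_num, Real.rpow_natCast]
  rwa [this] at h

lemma amgm {a b ε : ℝ} (hε : 0 < ε) : 2 * (a * b) ≤ ε * a ^ 2 + ε⁻¹ * b ^ 2 := by
  have h2 : ε⁻¹ * (ε * a - b) ^ 2 = ε * a ^ 2 + ε⁻¹ * b ^ 2 - 2 * (a * b) := by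
    field_simp; ring
  nlinarith [mul_nonneg (inv_nonneg.mpr hε.le) (sq_nonneg (ε * a - b))]

lemma hasDerivAt_normSq {f : ℝ → E} (hdiff : Differentiable ℝ f) (y : ℝ) :
    HasDerivAt (fun t => ‖f t‖ ^ 2) (2 * ⟪deriv f y, f y⟫) y := by
  have h1 : HasDerivAt f (deriv f y) y := (hdiff y).hasDerivAt
  have h2 := HasDerivAt.inner ℝ h1 h1
  have h3 : (fun t => ⟪f t, f t⟫) = fun t => ‖f t‖ ^ 2 :=
    funext fun t => real_inner_self_eq_norm_sq _
  rw [h3] at h2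
  exact h2.congr_deriv (by rw [real_inner_comm (deriv f y) (f y)]; ring)

lemma integrable_inner_deriv {f : ℝ → E} (hdiff : Differentiable ℝ f)
    (hf : MemLp f 2 (volume : Measure ℝ)) (hf' : MemLp (deriv f) 2 (volume : Measure ℝ)) :
    Integrable (fun y => 2 * ⟪deriv f y, f y⟫) := by
  have hm : AEStronglyMeasurable (fun y => (2 : ℝ) * ⟪deriv f y, f y⟫) (volume : Measure ℝ) :=
    (AEStronglyMeasurable.inner (aestronglyMeasurable_deriv f volume)
      hdiff.continuous.aestronglyMeasurable).const_mul 2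
  have hint : Integrable (fun y => ‖deriv f y‖ ^ 2 + ‖f y‖ ^ 2) :=
    (memL2_integrable_sq hf').add (memL2_integrable_sq hf)
  refine hint.mono' hm ?_
  filter_upwards with y
  have h1 := abs_real_inner_le_norm (deriv f y) (f y)
  rw [Real.norm_eq_abs, abs_mul, abs_two]
  nlinarith [abs_nonneg ⟪deriv f y, f y⟫, sq_nonneg (‖deriv f y‖ - ‖f y‖),
    norm_nonneg (deriv f y), norm_nonneg (f y)]

lemma sup_sq_le {f : ℝ → E} (hdiff : Differentiable ℝ f)
    (hf : MemLp f 2 (volume : Measure ℝ)) (hf' : MemLp (deriv f) 2 (volume : Measure ℝ))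
    {ε : ℝ} (hε : 0 < ε) (x : ℝ) :
    ‖f x‖ ^ 2 ≤ ε * (∫ y, ‖f y‖ ^ 2) + ε⁻¹ * (∫ y, ‖deriv f y‖ ^ 2) := by
  set u : ℝ → ℝ := fun t => ‖f t‖ ^ 2 with hu
  set v : ℝ → ℝ := fun y => 2 * ⟪deriv f y, f y⟫ with hv
  have hderiv : ∀ y, HasDerivAt u (v y) y := hasDerivAt_normSq hdiff
  have huint : Integrable u := memL2_integrable_sq hf
  have hvint : Integrable v := integrable_inner_deriv hdiff hf hf'
  have hlim : Tendsto u atTop (nhds 0) :=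
    tendsto_zero_of_hasDerivAt_of_integrableOn_Ioi (a := x) (fun y _ => hderiv y)
      hvint.integrableOn huint.integrableOn
  have hFTC : ∫ y in Ioi x, v y = 0 - u x :=
    integral_Ioi_of_hasDerivAt_of_tendsto' (fun y _ => hderiv y) hvint.integrableOn hlim
  have h1 : u x ≤ ∫ y, |v y| := by
    have h3 : -(∫ y in Ioi x, v y) ≤ |∫ y in Ioi x, v y| := neg_le_abs _
    have h4 : |∫ y in Ioi x, v y| ≤ ∫ y in Ioi x, |v y| := by
      simpa [Real.norm_eq_abs] using
        norm_integral_le_integral_norm (μ := (volume : Measure ℝ).restrict (Ioi x)) v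
    have h5 : ∫ y in Ioi x, |v y| ≤ ∫ y, |v y| :=
      setIntegral_le_integral hvint.abs (Eventually.of_forall fun y => abs_nonneg _)
    have h2 : u x = -(∫ y in Ioi x, v y) := by linarith [hFTC]
    linarith
  have h6 : ∫ y, |v y| ≤ ∫ y, (ε * ‖f y‖ ^ 2 + ε⁻¹ * ‖deriv f y‖ ^ 2) := by
    refine integral_mono hvint.abs
      (((memL2_integrable_sq hf).const_mul ε).add ((memL2_integrable_sq hf').const_mul ε⁻¹)) ?_
    intro y
    have hgm := amgm (a := ‖f y‖) (b := ‖deriv f y‖) hε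
    have h7 : |v y| ≤ 2 * (‖f y‖ * ‖deriv f y‖) := by
      rw [hv]
      simp only [abs_mul, abs_two]
      have := abs_real_inner_le_norm (deriv f y) (f y)
      nlinarith [abs_nonneg ⟪deriv f y, f y⟫]
    linarith
  have h8 : ∫ y, (ε * ‖f y‖ ^ 2 + ε⁻¹ * ‖deriv f y‖ ^ 2)
      = ε * (∫ y, ‖f y‖ ^ 2) + ε⁻¹ * (∫ y, ‖deriv f y‖ ^ 2) := by
    rw [integral_add ((memL2_integrable_sq hf).const_mul ε)
      ((memL2_integrable_sq hf').const_mul ε⁻¹), integral_const_mul, integral_const_mul]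
  calc u x ≤ ∫ y, |v y| := h1
    _ ≤ _ := h6.trans_eq h8

lemma cross_int_le {f : ℝ → E} (hdiff : Differentiable ℝ f)
    (hf : MemLp f 2 (volume : Measure ℝ)) (hf' : MemLp (deriv f) 2 (volume : Measure ℝ))
    {ε : ℝ} (hε : 0 < ε) :
    ∫ y, ‖f y‖ * ‖deriv f y‖ ≤ ε * (∫ y, ‖f y‖ ^ 2) + ε⁻¹ * (∫ y, ‖deriv f y‖ ^ 2) := by
  have h6 : ∫ y, ‖f y‖ * ‖deriv f y‖ ≤ ∫ y, (ε * ‖f y‖ ^ 2 + ε⁻¹ * ‖deriv f y‖ ^ 2) := by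
    refine integral_mono_of_nonneg
      (Eventually.of_forall fun y => mul_nonneg (norm_nonneg _) (norm_nonneg _))
      (((memL2_integrable_sq hf).const_mul ε).add ((memL2_integrable_sq hf').const_mul ε⁻¹)) ?_
    filter_upwards with y
    have hgm := amgm (a := ‖f y‖) (b := ‖deriv f y‖) hε
    have : 0 ≤ ‖f y‖ * ‖deriv f y‖ := mul_nonneg (norm_nonneg _) (norm_nonneg _)
    linarith
  have h8 : ∫ y, (ε * ‖f y‖ ^ 2 + ε⁻¹ * ‖deriv f y‖ ^ 2)
      = ε * (∫ y, ‖f y‖ ^ 2) + ε⁻¹ * (∫ y, ‖deriv f y‖ ^ 2) := by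
    rw [integral_add ((memL2_integrable_sq hf).const_mul ε)
      ((memL2_integrable_sq hf').const_mul ε⁻¹), integral_const_mul, integral_const_mul]
  exact h6.trans_eq h8

/-- Optimized-ε versions. -/
lemma eps_opt {A B : ℝ} (hA : 0 ≤ A) (hB : 0 ≤ B) :
    ∃ ε : ℝ, 0 < ε ∧
      ε * A + ε⁻¹ * B ≤ 2 * (Real.sqrt (A + 1) * Real.sqrt (B + 1)) := by
  have hA1 : (0:ℝ) < A + 1 := by linarith
  have hB1 : (0:ℝ) < B + 1 := by linarith
  have hsA : 0 < Real.sqrt (A + 1) := Real.sqrt_pos.mpr hA1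
  have hsB : 0 < Real.sqrt (B + 1) := Real.sqrt_pos.mpr hB1
  refine ⟨Real.sqrt (B + 1) / Real.sqrt (A + 1), div_pos hsB hsA, ?_⟩
  have h1 : Real.sqrt (A + 1) ^ 2 = A + 1 := Real.sq_sqrt hA1.le
  have h2 : Real.sqrt (B + 1) ^ 2 = B + 1 := Real.sq_sqrt hB1.le
  have hεinv : (Real.sqrt (B + 1) / Real.sqrt (A + 1))⁻¹
      = Real.sqrt (A + 1) / Real.sqrt (B + 1) := by
    rw [inv_div]
  rw [hεinv]
  have e1 : Real.sqrt (B + 1) / Real.sqrt (A + 1) * A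
      ≤ Real.sqrt (B + 1) / Real.sqrt (A + 1) * (A + 1) := by
    have := div_pos hsB hsA; nlinarith
  have e2 : Real.sqrt (A + 1) / Real.sqrt (B + 1) * B
      ≤ Real.sqrt (A + 1) / Real.sqrt (B + 1) * (B + 1) := by
    have := div_pos hsA hsB; nlinarith
  have e3 : Real.sqrt (B + 1) / Real.sqrt (A + 1) * (A + 1)
      = Real.sqrt (A + 1) * Real.sqrt (B + 1) := by
    rw [div_mul_eq_mul_div, div_eq_iff hsA.ne']
    nlinarith
  have e4 : Real.sqrt (A + 1) / Real.sqrt (B + 1) * (B + 1)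
      = Real.sqrt (A + 1) * Real.sqrt (B + 1) := by
    rw [div_mul_eq_mul_div, div_eq_iff hsB.ne']
    nlinarith
  linarith

lemma sup_sq_le' {f : ℝ → E} (hdiff : Differentiable ℝ f)
    (hf : MemLp f 2 (volume : Measure ℝ)) (hf' : MemLp (deriv f) 2 (volume : Measure ℝ)) (x : ℝ) :
    ‖f x‖ ^ 2 ≤ 2 * (Real.sqrt ((∫ y, ‖f y‖ ^ 2) + 1) * Real.sqrt ((∫ y, ‖deriv f y‖ ^ 2) + 1)) := by
  have hA : 0 ≤ ∫ y, ‖f y‖ ^ 2 := integral_nonneg fun y => sq_nonneg _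
  have hB : 0 ≤ ∫ y, ‖deriv f y‖ ^ 2 := integral_nonneg fun y => sq_nonneg _
  obtain ⟨ε, hε, hle⟩ := eps_opt hA hB
  exact (sup_sq_le hdiff hf hf' hε x).trans hle

lemma cross_int_le' {f : ℝ → E} (hdiff : Differentiable ℝ f)
    (hf : MemLp f 2 (volume : Measure ℝ)) (hf' : MemLp (deriv f) 2 (volume : Measure ℝ)) :
    ∫ y, ‖f y‖ * ‖deriv f y‖
      ≤ 2 * (Real.sqrt ((∫ y, ‖f y‖ ^ 2) + 1) * Real.sqrt ((∫ y, ‖deriv f y‖ ^ 2) + 1)) := by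
  have hA : 0 ≤ ∫ y, ‖f y‖ ^ 2 := integral_nonneg fun y => sq_nonneg _
  have hB : 0 ≤ ∫ y, ‖deriv f y‖ ^ 2 := integral_nonneg fun y => sq_nonneg _
  obtain ⟨ε, hε, hle⟩ := eps_opt hA hB
  exact (cross_int_le hdiff hf hf' hε).trans hle

end WAux



namespace WAux

lemma rpow_sq_eq {a : ℝ} (ha : 0 ≤ a) (r : ℝ) : (a ^ 2) ^ r = a ^ (2 * r) := by
  rw [← Real.rpow_natCast a 2, ← Real.rpow_mul ha]
  norm_num

lemma pow_interp {a S r : ℝ} (ha : 0 ≤ a) (hr : 0 ≤ r) (hS : a ^ 2 ≤ S) :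
    a ^ (r + 2) ≤ S ^ (r / 2) * a ^ 2 := by
  have hS0 : 0 ≤ S := le_trans (sq_nonneg a) hS
  have h1 : a ^ (r + 2) = a ^ r * a ^ 2 := by
    rw [Real.rpow_add' ha (by positivity), Real.rpow_two]
  have h2 : a ^ r = (a ^ 2) ^ (r / 2) := by
    rw [rpow_sq_eq ha]; ring_nf
  have h3 : (a ^ 2) ^ (r / 2) ≤ S ^ (r / 2) :=
    Real.rpow_le_rpow (sq_nonneg a) hS (by positivity)
  calc a ^ (r + 2) = (a ^ 2) ^ (r / 2) * a ^ 2 := by rw [h1, h2]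
    _ ≤ S ^ (r / 2) * a ^ 2 := mul_le_mul_of_nonneg_right h3 (sq_nonneg a)

lemma le_rpow_half {a S : ℝ} (ha : 0 ≤ a) (hS : a ^ 2 ≤ S) : a ≤ S ^ ((1:ℝ) / 2) := by
  have hS0 : 0 ≤ S := le_trans (sq_nonneg a) hS
  have h2 : a = (a ^ 2) ^ ((1:ℝ) / 2) := by
    rw [rpow_sq_eq ha]; norm_num
  rw [h2]
  exact Real.rpow_le_rpow (sq_nonneg a) hS (by norm_num)

lemma young_aux {θ : ℝ} (hθ0 : 0 ≤ θ) (hθ1 : θ < 1) {ε : ℝ} (hε : 0 < ε) :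
    ∃ C : ℝ, 0 ≤ C ∧ ∀ z : ℝ, 1 ≤ z → z ^ θ ≤ ε * z + C := by
  set R : ℝ := max 1 (ε ^ (1 / (θ - 1))) with hR
  have hR1 : (1:ℝ) ≤ R := le_max_left _ _
  have hR0 : (0:ℝ) < R := lt_of_lt_of_le one_pos hR1
  refine ⟨R ^ θ, Real.rpow_nonneg hR0.le θ, fun z hz => ?_⟩
  have hz0 : (0:ℝ) < z := lt_of_lt_of_le one_pos hz
  rcases le_total z R with hcase | hcase
  · have : z ^ θ ≤ R ^ θ := Real.rpow_le_rpow hz0.le hcase hθ0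
    nlinarith [mul_pos hε hz0]
  · -- R ≤ z, show z ^ θ ≤ ε * z
    have key : z ^ (θ - 1) ≤ ε := by
      have hεR : ε ^ (1 / (θ - 1)) ≤ z := le_trans (le_max_right _ _) hcase
      have h1θ : 0 ≤ 1 - θ := by linarith
      have hmono : (ε ^ (1 / (θ - 1))) ^ (1 - θ) ≤ z ^ (1 - θ) :=
        Real.rpow_le_rpow (Real.rpow_nonneg hε.le _) hεR h1θ
      have hcalc : (ε ^ (1 / (θ - 1))) ^ (1 - θ) = ε⁻¹ := by
        rw [← Real.rpow_mul hε.le]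
        have : 1 / (θ - 1) * (1 - θ) = -1 := by
          have hne : θ - 1 ≠ 0 := by linarith
          rw [div_mul_eq_mul_div, one_mul, div_eq_iff hne]; ring
        rw [this, Real.rpow_neg_one]
      rw [hcalc] at hmono
      have hzpos : 0 < z ^ (1 - θ) := Real.rpow_pos_of_pos hz0 _
      have : (z ^ (1 - θ))⁻¹ ≤ (ε⁻¹)⁻¹ := by
        apply inv_anti₀ (inv_pos.mpr hε) hmono
      rw [inv_inv] at this
      calc z ^ (θ - 1) = (z ^ (1 - θ))⁻¹ := by
            rw [← Real.rpow_neg hz0.le]; ring_nf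
        _ ≤ ε := this
    have h2 : z ^ θ = z ^ (θ - 1) * z := by
      rw [← Real.rpow_add_one hz0.ne' (θ - 1)]; ring_nf
    rw [h2]
    have := mul_le_mul_of_nonneg_right key hz0.le
    nlinarith [Real.rpow_nonneg hR0.le θ]

end WAux



namespace WAux

set_option maxHeartbeats 2000000 in
lemma main_arith
    (α β₁ β₂ p q CA CG CE cA c₁ K₁ K₂ K₃ K₄ θ CY A B D F Sh Sg NN EE : ℝ)
    (hα : 0 < α) (hβ₁0 : 0 ≤ β₁) (hβ₂0 : 0 < β₂)
    (hq1 : 1 ≤ q) (hq4 : q < 4) (hp1 : 1 ≤ p) (hp43 : p < 4/3)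
    (hCA : 0 ≤ CA) (hCG : 0 ≤ CG) (hCE : 0 ≤ CE) (hCY0 : 0 ≤ CY)
    (hcA : cA = Real.sqrt (CA + 1)) (hc₁ : c₁ = CG + 1 + 2 * cA)
    (hK₁ : K₁ = β₁ * CA * (2 * cA) ^ (q / 2))
    (hK₂ : K₂ = β₂ * c₁ * (2 * c₁ ^ ((1:ℝ)/2)) ^ (p / 2))
    (hK₃ : K₃ = α * CA * (2 * c₁ ^ ((1:ℝ)/2)) ^ ((1:ℝ)/2))
    (hK₄ : K₄ = K₁ + K₂ + K₃)
    (hθ : θ = max (q/4) (3*p/8 + 1/2))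
    (hCY : ∀ z : ℝ, 1 ≤ z → z ^ θ ≤ (2*(K₄+1))⁻¹ * z + CY)
    (hA0 : 0 ≤ A) (hB0 : 0 ≤ B) (hD0 : 0 ≤ D) (hF0 : 0 ≤ F)
    (hAle : A ≤ CA) (hEE : EE ≤ CE)
    (hShdef : Sh = 2 * (Real.sqrt (A+1) * Real.sqrt (B+1)))
    (hSgdef : Sg = 2 * (Real.sqrt (D+1) * Real.sqrt (F+1)))
    (hDle : D ≤ CG + Sh)
    (hsplit : B + F = EE + NN)
    (hNN : NN ≤ β₁ * (Sh ^ (q/2) * A) + β₂ * (Sg ^ (p/2) * D) + α * (Sg ^ ((1:ℝ)/2) * A)) :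
    A + B + D + F ≤ CA + 2*(CE + 2 + K₄*CY) + CG + 2*cA*(2*(CE + 2 + K₄*CY)) ^ ((1:ℝ)/2) := by
  have hcA0 : 0 < cA := by rw [hcA]; exact Real.sqrt_pos.mpr (by linarith)
  have hcA1 : 1 ≤ cA := by
    rw [hcA]
    have := Real.sqrt_le_sqrt (show (1:ℝ) ≤ CA + 1 by linarith)
    simpa using this
  have hc₁1 : 1 ≤ c₁ := by rw [hc₁]; linarith
  have hc₁0 : 0 ≤ c₁ := by linarith
  set Z := B + F + 2 with hZdef
  have hZ1 : (1:ℝ) ≤ Z := by rw [hZdef]; linarith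
  have hZ0 : (0:ℝ) ≤ Z := by linarith
  have hZp : (0:ℝ) < Z := by linarith
  have hZhalf0 : 0 ≤ Z ^ ((1:ℝ)/2) := Real.rpow_nonneg hZ0 _
  have hZhalf1 : 1 ≤ Z ^ ((1:ℝ)/2) := by
    have := Real.rpow_le_rpow (by norm_num : (0:ℝ) ≤ 1) hZ1 (by norm_num : (0:ℝ) ≤ 1/2)
    simpa using this
  have hsqA : Real.sqrt (A+1) ≤ cA := by rw [hcA]; exact Real.sqrt_le_sqrt (by linarith)
  have hsqB : Real.sqrt (B+1) ≤ Z ^ ((1:ℝ)/2) := by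
    rw [Real.sqrt_eq_rpow]
    exact Real.rpow_le_rpow (by linarith) (by rw [hZdef]; linarith) (by norm_num)
  have hsF : Real.sqrt (F+1) ≤ Z ^ ((1:ℝ)/2) := by
    rw [Real.sqrt_eq_rpow]
    exact Real.rpow_le_rpow (by linarith) (by rw [hZdef]; linarith) (by norm_num)
  have hSh0 : 0 ≤ Sh := by rw [hShdef]; positivity
  have hShle : Sh ≤ 2 * cA * Z ^ ((1:ℝ)/2) := by
    rw [hShdef]
    have h1 : Real.sqrt (A+1) * Real.sqrt (B+1) ≤ cA * Z ^ ((1:ℝ)/2) :=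
      mul_le_mul hsqA hsqB (Real.sqrt_nonneg _) hcA0.le
    linarith
  have hD1 : D + 1 ≤ c₁ * Z ^ ((1:ℝ)/2) := by
    have h1 : (CG + 1) * 1 ≤ (CG + 1) * Z ^ ((1:ℝ)/2) :=
      mul_le_mul_of_nonneg_left hZhalf1 (by linarith)
    have hexp : (CG + 1 + 2*cA) * Z^((1:ℝ)/2)
        = (CG+1)*Z^((1:ℝ)/2) + 2*cA*Z^((1:ℝ)/2) := by ring
    rw [hc₁, hexp]
    linarith [hDle, hShle]
  have hD_le2 : D ≤ c₁ * Z ^ ((1:ℝ)/2) := by linarith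
  have hsD : Real.sqrt (D+1) ≤ c₁ ^ ((1:ℝ)/2) * Z ^ ((1:ℝ)/4) := by
    rw [Real.sqrt_eq_rpow]
    calc (D+1) ^ ((1:ℝ)/2) ≤ (c₁ * Z ^ ((1:ℝ)/2)) ^ ((1:ℝ)/2) :=
          Real.rpow_le_rpow (by linarith) hD1 (by norm_num)
      _ = c₁ ^ ((1:ℝ)/2) * Z ^ ((1:ℝ)/4) := by
          rw [Real.mul_rpow hc₁0 hZhalf0, ← Real.rpow_mul hZ0]
          norm_num
  have hSg0 : 0 ≤ Sg := by rw [hSgdef]; positivity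
  have hSgle : Sg ≤ 2 * c₁ ^ ((1:ℝ)/2) * Z ^ ((3:ℝ)/4) := by
    rw [hSgdef]
    have h1 : Real.sqrt (D+1) * Real.sqrt (F+1)
        ≤ (c₁ ^ ((1:ℝ)/2) * Z ^ ((1:ℝ)/4)) * Z ^ ((1:ℝ)/2) :=
      mul_le_mul hsD hsF (Real.sqrt_nonneg _) (by positivity)
    have h2 : (c₁ ^ ((1:ℝ)/2) * Z ^ ((1:ℝ)/4)) * Z ^ ((1:ℝ)/2)
        = c₁ ^ ((1:ℝ)/2) * Z ^ ((3:ℝ)/4) := by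
      rw [mul_assoc, ← Real.rpow_add hZp]
      norm_num
    rw [h2] at h1
    linarith
  -- rpow expansions of bounds
  have e1 : Sh ^ (q/2) ≤ (2*cA) ^ (q/2) * Z ^ (q/4) := by
    calc Sh ^ (q/2) ≤ (2*cA*Z^((1:ℝ)/2)) ^ (q/2) :=
          Real.rpow_le_rpow hSh0 hShle (by linarith)
      _ = (2*cA)^(q/2) * Z^(q/4) := by
          rw [Real.mul_rpow (by positivity) hZhalf0, ← Real.rpow_mul hZ0,
            show (1:ℝ)/2 * (q/2) = q/4 by ring]
  have e2 : Sg ^ (p/2) ≤ (2*c₁^((1:ℝ)/2)) ^ (p/2) * Z ^ (3*p/8) := by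
    calc Sg ^ (p/2) ≤ (2*c₁^((1:ℝ)/2)*Z^((3:ℝ)/4)) ^ (p/2) :=
          Real.rpow_le_rpow hSg0 hSgle (by linarith)
      _ = (2*c₁^((1:ℝ)/2))^(p/2) * Z^(3*p/8) := by
          rw [Real.mul_rpow (by positivity) (Real.rpow_nonneg hZ0 _), ← Real.rpow_mul hZ0,
            show (3:ℝ)/4 * (p/2) = 3*p/8 by ring]
  have e3 : Sg ^ ((1:ℝ)/2) ≤ (2*c₁^((1:ℝ)/2)) ^ ((1:ℝ)/2) * Z ^ ((3:ℝ)/8) := by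
    calc Sg ^ ((1:ℝ)/2) ≤ (2*c₁^((1:ℝ)/2)*Z^((3:ℝ)/4)) ^ ((1:ℝ)/2) :=
          Real.rpow_le_rpow hSg0 hSgle (by norm_num)
      _ = (2*c₁^((1:ℝ)/2))^((1:ℝ)/2) * Z^((3:ℝ)/8) := by
          rw [Real.mul_rpow (by positivity) (Real.rpow_nonneg hZ0 _), ← Real.rpow_mul hZ0,
            show (3:ℝ)/4 * ((1:ℝ)/2) = (3:ℝ)/8 by ring]
  -- term bounds
  have hT1 : β₁ * (Sh ^ (q/2) * A) ≤ K₁ * Z ^ (q/4) := by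
    calc β₁ * (Sh ^ (q/2) * A) ≤ β₁ * ((2*cA)^(q/2) * Z^(q/4) * CA) :=
          mul_le_mul_of_nonneg_left
            (mul_le_mul e1 hAle hA0 (by positivity)) hβ₁0
      _ = K₁ * Z^(q/4) := by rw [hK₁]; ring
  have hT2 : β₂ * (Sg ^ (p/2) * D) ≤ K₂ * Z ^ (3*p/8 + 1/2) := by
    calc β₂ * (Sg ^ (p/2) * D)
        ≤ β₂ * ((2*c₁^((1:ℝ)/2))^(p/2) * Z^(3*p/8) * (c₁ * Z^((1:ℝ)/2))) :=
          mul_le_mul_of_nonneg_left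
            (mul_le_mul e2 hD_le2 hD0 (by positivity)) hβ₂0.le
      _ = β₂ * c₁ * (2*c₁^((1:ℝ)/2))^(p/2) * (Z^(3*p/8) * Z^((1:ℝ)/2)) := by ring
      _ = K₂ * Z ^ (3*p/8 + 1/2) := by
          rw [← Real.rpow_add hZp, hK₂]
  have hT3 : α * (Sg ^ ((1:ℝ)/2) * A) ≤ K₃ * Z ^ ((3:ℝ)/8) := by
    calc α * (Sg ^ ((1:ℝ)/2) * A) ≤ α * ((2*c₁^((1:ℝ)/2))^((1:ℝ)/2) * Z^((3:ℝ)/8) * CA) :=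
          mul_le_mul_of_nonneg_left
            (mul_le_mul e3 hAle hA0 (by positivity)) hα.le
      _ = K₃ * Z^((3:ℝ)/8) := by rw [hK₃]; ring
  -- nonneg of constants
  have hK₁0 : 0 ≤ K₁ := by
    rw [hK₁]; exact mul_nonneg (mul_nonneg hβ₁0 hCA) (Real.rpow_nonneg (by positivity) _)
  have hK₂0 : 0 ≤ K₂ := by
    rw [hK₂]; exact mul_nonneg (mul_nonneg hβ₂0.le hc₁0) (Real.rpow_nonneg (by positivity) _)
  have hK₃0 : 0 ≤ K₃ := by
    rw [hK₃]; exact mul_nonneg (mul_nonneg hα.le hCA) (Real.rpow_nonneg (by positivity) _)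
  have hK₄0 : 0 ≤ K₄ := by rw [hK₄]; linarith
  -- exponent comparisons
  have hθq : q/4 ≤ θ := hθ ▸ le_max_left _ _
  have hθp : 3*p/8 + 1/2 ≤ θ := hθ ▸ le_max_right _ _
  have hθ38 : (3:ℝ)/8 ≤ θ := le_trans (by linarith) hθp
  have z1 : Z ^ (q/4) ≤ Z ^ θ := Real.rpow_le_rpow_of_exponent_le hZ1 hθq
  have z2 : Z ^ (3*p/8 + 1/2) ≤ Z ^ θ := Real.rpow_le_rpow_of_exponent_le hZ1 hθp
  have z3 : Z ^ ((3:ℝ)/8) ≤ Z ^ θ := Real.rpow_le_rpow_of_exponent_le hZ1 hθ38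
  have hNN2 : NN ≤ K₄ * Z ^ θ := by
    have m1 := mul_le_mul_of_nonneg_left z1 hK₁0
    have m2 := mul_le_mul_of_nonneg_left z2 hK₂0
    have m3 := mul_le_mul_of_nonneg_left z3 hK₃0
    have : K₄ * Z ^ θ = K₁ * Z ^ θ + K₂ * Z ^ θ + K₃ * Z ^ θ := by rw [hK₄]; ring
    linarith [hNN, hT1, hT2, hT3]
  -- solve for Z
  have hZbound : Z ≤ 2*(CE + 2 + K₄*CY) := by
    have hy := hCY Z hZ1
    have hm0 : (0:ℝ) < 2*(K₄+1) := by linarith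
    have hmm : K₄ * (2*(K₄+1))⁻¹ ≤ 1/2 := by
      rw [← div_eq_mul_inv, div_le_iff₀ hm0]
      linarith
    have h5 : K₄ * Z^θ ≤ K₄ * ((2*(K₄+1))⁻¹ * Z + CY) := mul_le_mul_of_nonneg_left hy hK₄0
    have h6 : K₄ * ((2*(K₄+1))⁻¹ * Z + CY) ≤ (1/2)*Z + K₄*CY := by
      have e : K₄ * ((2*(K₄+1))⁻¹ * Z + CY) = (K₄ * (2*(K₄+1))⁻¹) * Z + K₄*CY := by ring
      have h := mul_le_mul_of_nonneg_right hmm hZ0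
      linarith
    have hZeq : Z = EE + NN + 2 := by rw [hZdef, hsplit]
    linarith [hEE, hNN2]
  have hZCZ : Z ^ ((1:ℝ)/2) ≤ (2*(CE + 2 + K₄*CY)) ^ ((1:ℝ)/2) :=
    Real.rpow_le_rpow hZ0 hZbound (by norm_num)
  have hDfinal : D ≤ CG + 2*cA*(2*(CE + 2 + K₄*CY)) ^ ((1:ℝ)/2) := by
    have h7 : 2*cA*Z^((1:ℝ)/2) ≤ 2*cA*(2*(CE + 2 + K₄*CY)) ^ ((1:ℝ)/2) := by
      have := mul_le_mul_of_nonneg_left hZCZ (show (0:ℝ) ≤ 2*cA by linarith)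
      linarith
    linarith [hDle, hShle]
  have hBF : B + F ≤ 2*(CE + 2 + K₄*CY) := by
    have : B + F = Z - 2 := by rw [hZdef]; ring
    linarith [hZbound]
  linarith [hAle, hBF, hDfinal]

end WAux

set_option maxHeartbeats 2000000 in
/-- Every minimizing sequence for `W(s,t)` is bounded in `Y = H¹_ℂ × H¹`. -/
theorem W_minimizing_seq_bounded (α τ₁ τ₂ p q : ℝ)
    (hα : 0 < α) (hτ₁ : 0 ≤ τ₁) (hτ₂ : 0 < τ₂)
    (hq1 : 1 ≤ q) (hq4 : q < 4) (hp1 : 1 ≤ p) (hp43 : p < 4 / 3)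
    (P : ℝ → ℝ) (hP₁ : ∀ y : ℝ, P y ≤ |y| ^ (p + 2))
    (hP₂ : ∀ y : ℝ, 0 ≤ y → P y = y ^ (p + 2))
    (s t : ℝ) (hs : 0 < s)
    (h : ℕ → ℝ → ℂ) (g : ℕ → ℝ → ℝ)
    (hmem : ∀ n, H1C (h n) ∧ H1R (g n) ∧
      Integrable (Edens (2 * τ₁ / (q + 2)) (2 * τ₂ / ((p + 1) * (p + 2))) α q P (h n) (g n)))
    (hHs : Filter.Tendsto (fun n => Hval (h n)) Filter.atTop (nhds s))
    (hGt : Filter.Tendsto (fun n => Gval (h n) (g n)) Filter.atTop (nhds t))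
    (hE : Filter.Tendsto
      (fun n => ∫ x : ℝ, Edens (2 * τ₁ / (q + 2)) (2 * τ₂ / ((p + 1) * (p + 2))) α q P (h n) (g n) x)
      Filter.atTop
      (nhds (Wfun (2 * τ₁ / (q + 2)) (2 * τ₂ / ((p + 1) * (p + 2))) α q P s t))) :
    ∃ C : ℝ, ∀ n,
      (∫ x : ℝ, ‖h n x‖ ^ 2) + (∫ x : ℝ, ‖deriv (h n) x‖ ^ 2) +
        (∫ x : ℝ, (g n x) ^ 2) + (∫ x : ℝ, (deriv (g n) x) ^ 2) ≤ C := by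
  classical
  set β₁ := 2 * τ₁ / (q + 2) with hβ₁def
  set β₂ := 2 * τ₂ / ((p + 1) * (p + 2)) with hβ₂def
  have hβ₁0 : 0 ≤ β₁ := by
    rw [hβ₁def]; apply div_nonneg <;> linarith
  have hβ₂0 : 0 < β₂ := by
    rw [hβ₂def]; exact div_pos (by linarith) (by nlinarith)
  obtain ⟨CA₀, hCA₀⟩ := hHs.bddAbove_range
  obtain ⟨CG₀, hCG₀⟩ := hGt.bddAbove_range
  obtain ⟨CE₀, hCE₀⟩ := hE.bddAbove_range
  set CA := max CA₀ 0 with hCAdef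
  set CG := max CG₀ 0 with hCGdef
  set CE := max CE₀ 0 with hCEdef
  have hCA0 : (0:ℝ) ≤ CA := le_max_right _ _
  have hCG0 : (0:ℝ) ≤ CG := le_max_right _ _
  have hCE0 : (0:ℝ) ≤ CE := le_max_right _ _
  set cA := Real.sqrt (CA + 1) with hcAdef
  set c₁ := CG + 1 + 2 * cA with hc₁def
  set K₁ := β₁ * CA * (2 * cA) ^ (q / 2) with hK₁def
  set K₂ := β₂ * c₁ * (2 * c₁ ^ ((1:ℝ)/2)) ^ (p / 2) with hK₂def
  set K₃ := α * CA * (2 * c₁ ^ ((1:ℝ)/2)) ^ ((1:ℝ)/2) with hK₃def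
  set K₄ := K₁ + K₂ + K₃ with hK₄def
  set θ := max (q/4) (3*p/8 + 1/2) with hθdef
  have hθ0 : 0 ≤ θ := by
    rw [hθdef]; exact le_trans (by linarith) (le_max_right _ _)
  have hθ1 : θ < 1 := by
    rw [hθdef]; exact max_lt (by linarith) (by linarith)
  have hcA0 : (0:ℝ) ≤ cA := by rw [hcAdef]; exact Real.sqrt_nonneg _
  have hc₁0 : (0:ℝ) ≤ c₁ := by rw [hc₁def]; linarith
  have h2c₁ : (0:ℝ) ≤ 2 * c₁ ^ ((1:ℝ)/2) := by
    have := Real.rpow_nonneg hc₁0 ((1:ℝ)/2); linarith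
  have hK₁0 : 0 ≤ K₁ := by
    rw [hK₁def]
    exact mul_nonneg (mul_nonneg hβ₁0 hCA0) (Real.rpow_nonneg (by linarith) _)
  have hK₂0 : 0 ≤ K₂ := by
    rw [hK₂def]
    exact mul_nonneg (mul_nonneg hβ₂0.le hc₁0) (Real.rpow_nonneg h2c₁ _)
  have hK₃0 : 0 ≤ K₃ := by
    rw [hK₃def]
    exact mul_nonneg (mul_nonneg hα.le hCA0) (Real.rpow_nonneg h2c₁ _)
  have hK₄0 : 0 ≤ K₄ := by rw [hK₄def]; linarith
  have hmpos : (0:ℝ) < (2*(K₄+1))⁻¹ := inv_pos.mpr (by linarith)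
  obtain ⟨CY, hCY0, hCY⟩ := WAux.young_aux hθ0 hθ1 hmpos
  refine ⟨CA + 2*(CE + 2 + K₄*CY) + CG + 2*cA*(2*(CE + 2 + K₄*CY)) ^ ((1:ℝ)/2),
    fun n => ?_⟩
  obtain ⟨⟨hdf, hf2, hf'2⟩, ⟨hdg, hg2, hg'2⟩, hEint⟩ := hmem n
  have hA0 : 0 ≤ ∫ x : ℝ, ‖h n x‖ ^ 2 := integral_nonneg fun x => sq_nonneg _
  have hB0 : 0 ≤ ∫ x : ℝ, ‖deriv (h n) x‖ ^ 2 := integral_nonneg fun x => sq_nonneg _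
  have hD0 : 0 ≤ ∫ x : ℝ, (g n x) ^ 2 := integral_nonneg fun x => sq_nonneg _
  have hF0 : 0 ≤ ∫ x : ℝ, (deriv (g n) x) ^ 2 := integral_nonneg fun x => sq_nonneg _
  have hAle : (∫ x : ℝ, ‖h n x‖ ^ 2) ≤ CA :=
    le_trans (hCA₀ (Set.mem_range_self n)) (le_max_left _ _)
  have hEE : (∫ x : ℝ, Edens β₁ β₂ α q P (h n) (g n) x) ≤ CE :=
    le_trans (hCE₀ (Set.mem_range_self n)) (le_max_left _ _)
  have hGle : Gval (h n) (g n) ≤ CG :=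
    le_trans (hCG₀ (Set.mem_range_self n)) (le_max_left _ _)
  have hShx : ∀ x, ‖h n x‖ ^ 2
      ≤ 2 * (Real.sqrt ((∫ y : ℝ, ‖h n y‖ ^ 2) + 1)
          * Real.sqrt ((∫ y : ℝ, ‖deriv (h n) y‖ ^ 2) + 1)) :=
    fun x => WAux.sup_sq_le' hdf hf2 hf'2 x
  have egD : (∫ y : ℝ, ‖g n y‖ ^ 2) = ∫ x : ℝ, (g n x) ^ 2 := by
    simp only [Real.norm_eq_abs, sq_abs]
  have egF : (∫ y : ℝ, ‖deriv (g n) y‖ ^ 2) = ∫ x : ℝ, (deriv (g n) x) ^ 2 := by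
    simp only [Real.norm_eq_abs, sq_abs]
  have hSgx : ∀ x, (g n x) ^ 2
      ≤ 2 * (Real.sqrt ((∫ y : ℝ, (g n y) ^ 2) + 1)
          * Real.sqrt ((∫ y : ℝ, (deriv (g n) y) ^ 2) + 1)) := by
    intro x
    have hx := WAux.sup_sq_le' hdg hg2 hg'2 x
    rw [egD, egF] at hx
    rwa [Real.norm_eq_abs, sq_abs] at hx
  have hDle : (∫ x : ℝ, (g n x) ^ 2)
      ≤ CG + 2 * (Real.sqrt ((∫ y : ℝ, ‖h n y‖ ^ 2) + 1)
          * Real.sqrt ((∫ y : ℝ, ‖deriv (h n) y‖ ^ 2) + 1)) := by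
    have hcross := WAux.cross_int_le' hdf hf2 hf'2
    have h1 : |(∫ x : ℝ, h n x * (starRingEnd ℂ) (deriv (h n) x)).im|
        ≤ ‖∫ x : ℝ, h n x * (starRingEnd ℂ) (deriv (h n) x)‖ := by
      exact Complex.abs_im_le_norm _
    have h2 := norm_integral_le_integral_norm (μ := (volume : Measure ℝ))
      (fun x => h n x * (starRingEnd ℂ) (deriv (h n) x))
    have h3 : (∫ x : ℝ, ‖h n x * (starRingEnd ℂ) (deriv (h n) x)‖)
        = ∫ x : ℝ, ‖h n x‖ * ‖deriv (h n) x‖ := by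
      congr 1; funext x; rw [norm_mul, RCLike.norm_conj]
    have hgval : Gval (h n) (g n) = (∫ x : ℝ, (g n x) ^ 2)
        + (∫ x : ℝ, h n x * (starRingEnd ℂ) (deriv (h n) x)).im := rfl
    have hnegabs := neg_abs_le ((∫ x : ℝ, h n x * (starRingEnd ℂ) (deriv (h n) x)).im)
    rw [h3] at h2
    linarith [hGle, hcross]
  have hIA : Integrable (fun x => ‖h n x‖ ^ 2) := WAux.memL2_integrable_sq hf2
  have hIB : Integrable (fun x => ‖deriv (h n) x‖ ^ 2) := WAux.memL2_integrable_sq hf'2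
  have hID : Integrable (fun x => (g n x) ^ 2) := by
    have := WAux.memL2_integrable_sq hg2
    simpa [Real.norm_eq_abs, sq_abs] using this
  have hIF : Integrable (fun x => (deriv (g n) x) ^ 2) := by
    have := WAux.memL2_integrable_sq hg'2
    simpa [Real.norm_eq_abs, sq_abs] using this
  have hNfeq : (fun x => β₁ * ‖h n x‖ ^ (q + 2) + β₂ * P (g n x) + α * (‖h n x‖ ^ 2 * g n x))
      = fun x => (‖deriv (h n) x‖ ^ 2 + (deriv (g n) x) ^ 2)
          - Edens β₁ β₂ α q P (h n) (g n) x := by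
    funext x; simp only [Edens]; ring
  have hINf : Integrable
      (fun x => β₁ * ‖h n x‖ ^ (q + 2) + β₂ * P (g n x) + α * (‖h n x‖ ^ 2 * g n x)) := by
    rw [hNfeq]; exact (hIB.add hIF).sub hEint
  have hsplit : (∫ x : ℝ, ‖deriv (h n) x‖ ^ 2) + (∫ x : ℝ, (deriv (g n) x) ^ 2)
      = (∫ x : ℝ, Edens β₁ β₂ α q P (h n) (g n) x)
        + ∫ x : ℝ, (β₁ * ‖h n x‖ ^ (q + 2) + β₂ * P (g n x) + α * (‖h n x‖ ^ 2 * g n x)) := by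
    have h1 : (∫ x : ℝ, (β₁ * ‖h n x‖ ^ (q + 2) + β₂ * P (g n x) + α * (‖h n x‖ ^ 2 * g n x)))
        = ((∫ x : ℝ, ‖deriv (h n) x‖ ^ 2) + (∫ x : ℝ, (deriv (g n) x) ^ 2))
          - ∫ x : ℝ, Edens β₁ β₂ α q P (h n) (g n) x := by
      have hIBF : Integrable (fun x => ‖deriv (h n) x‖ ^ 2 + (deriv (g n) x) ^ 2) :=
        hIB.add hIF
      rw [hNfeq, integral_sub hIBF hEint, integral_add hIB hIF]
    linarith
  set Sh := 2 * (Real.sqrt ((∫ y : ℝ, ‖h n y‖ ^ 2) + 1)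
      * Real.sqrt ((∫ y : ℝ, ‖deriv (h n) y‖ ^ 2) + 1)) with hShdef
  set Sg := 2 * (Real.sqrt ((∫ y : ℝ, (g n y) ^ 2) + 1)
      * Real.sqrt ((∫ y : ℝ, (deriv (g n) y) ^ 2) + 1)) with hSgdef
  have hpt : ∀ x, β₁ * ‖h n x‖ ^ (q + 2) + β₂ * P (g n x) + α * (‖h n x‖ ^ 2 * g n x)
      ≤ β₁ * (Sh ^ (q/2) * ‖h n x‖ ^ 2) + β₂ * (Sg ^ (p/2) * (g n x) ^ 2)
        + α * (Sg ^ ((1:ℝ)/2) * ‖h n x‖ ^ 2) := by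
    intro x
    have t1 : ‖h n x‖ ^ (q + 2) ≤ Sh ^ (q/2) * ‖h n x‖ ^ 2 :=
      WAux.pow_interp (norm_nonneg _) (by linarith) (hShx x)
    have habs : |g n x| ^ 2 ≤ Sg := by rw [sq_abs]; exact hSgx x
    have t2 : P (g n x) ≤ Sg ^ (p/2) * (g n x) ^ 2 := by
      refine le_trans (hP₁ (g n x)) ?_
      have := WAux.pow_interp (abs_nonneg (g n x)) (by linarith : (0:ℝ) ≤ p) habs
      rwa [sq_abs] at this
    have t3 : ‖h n x‖ ^ 2 * g n x ≤ Sg ^ ((1:ℝ)/2) * ‖h n x‖ ^ 2 := by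
      calc ‖h n x‖ ^ 2 * g n x ≤ ‖h n x‖ ^ 2 * Sg ^ ((1:ℝ)/2) :=
            mul_le_mul_of_nonneg_left
              (le_trans (le_abs_self _) (WAux.le_rpow_half (abs_nonneg _) habs))
              (sq_nonneg _)
        _ = Sg ^ ((1:ℝ)/2) * ‖h n x‖ ^ 2 := mul_comm _ _
    exact add_le_add (add_le_add (mul_le_mul_of_nonneg_left t1 hβ₁0)
      (mul_le_mul_of_nonneg_left t2 hβ₂0.le)) (mul_le_mul_of_nonneg_left t3 hα.le)
  have hIR : Integrable (fun x => β₁ * (Sh ^ (q/2) * ‖h n x‖ ^ 2)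
      + β₂ * (Sg ^ (p/2) * (g n x) ^ 2) + α * (Sg ^ ((1:ℝ)/2) * ‖h n x‖ ^ 2)) :=
    (((hIA.const_mul _).const_mul β₁).add ((hID.const_mul _).const_mul β₂)).add
      ((hIA.const_mul _).const_mul α)
  have hNN : (∫ x : ℝ, (β₁ * ‖h n x‖ ^ (q + 2) + β₂ * P (g n x) + α * (‖h n x‖ ^ 2 * g n x)))
      ≤ β₁ * (Sh ^ (q/2) * (∫ x : ℝ, ‖h n x‖ ^ 2))
        + β₂ * (Sg ^ (p/2) * (∫ x : ℝ, (g n x) ^ 2))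
        + α * (Sg ^ ((1:ℝ)/2) * (∫ x : ℝ, ‖h n x‖ ^ 2)) := by
    refine le_trans (integral_mono hINf hIR fun x => hpt x) ?_
    have hI1 : Integrable (fun x => β₁ * (Sh ^ (q/2) * ‖h n x‖ ^ 2)) :=
      (hIA.const_mul _).const_mul β₁
    have hI2 : Integrable (fun x => β₂ * (Sg ^ (p/2) * (g n x) ^ 2)) :=
      (hID.const_mul _).const_mul β₂
    have hI3 : Integrable (fun x => α * (Sg ^ ((1:ℝ)/2) * ‖h n x‖ ^ 2)) :=
      (hIA.const_mul _).const_mul α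
    have hI12 : Integrable (fun x => β₁ * (Sh ^ (q/2) * ‖h n x‖ ^ 2)
        + β₂ * (Sg ^ (p/2) * (g n x) ^ 2)) := hI1.add hI2
    rw [integral_add hI12 hI3, integral_add hI1 hI2,
      integral_const_mul, integral_const_mul, integral_const_mul, integral_const_mul,
      integral_const_mul, integral_const_mul]
  exact WAux.main_arith α β₁ β₂ p q CA CG CE cA c₁ K₁ K₂ K₃ K₄ θ CY
    (∫ x : ℝ, ‖h n x‖ ^ 2) (∫ x : ℝ, ‖deriv (h n) x‖ ^ 2)
    (∫ x : ℝ, (g n x) ^ 2) (∫ x : ℝ, (deriv (g n) x) ^ 2)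
    Sh Sg
    (∫ x : ℝ, (β₁ * ‖h n x‖ ^ (q + 2) + β₂ * P (g n x) + α * (‖h n x‖ ^ 2 * g n x)))
    (∫ x : ℝ, Edens β₁ β₂ α q P (h n) (g n) x)
    hα hβ₁0 hβ₂0 hq1 hq4 hp1 hp43 hCA0 hCG0 hCE0 hCY0
    hcAdef hc₁def hK₁def hK₂def hK₃def hK₄def hθdef hCY
    hA0 hB0 hD0 hF0 hAle hEE hShdef hSgdef hDle hsplit hNN
end
end
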